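/- arXiv:1902.07478 — 3 statements merged into one kernel-verified Lean document; each statement's English description precedes it below -/
import Mathlib

section
/- For every real s, every γ with 0 ≤ γ ≤ 1, every r ∈ ℝ and every coefficient sequence f with ‖f‖_{r+2γ} < ∞, one has ‖e^{is∂ₓ²} f − f‖_r ≤ 2^{1−γ} |s|^γ ‖f‖_{r+2γ}; equivalently, Σ_{k∈ℤ}(1+k²)^r |e^{−isk²} − 1|² |f̂_k|² ≤ (2^{1−γ}|s|^γ)² Σ_{k∈ℤ}(1+k²)^{r+2γ} |f̂_k|². -/
open Real Complex

lemma norm_exp_I_sub_one_le (θ : ℝ) :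
    ‖Complex.exp (θ * Complex.I) - 1‖ ≤ min 2 |θ| := by
  refine le_min ?_ ?_
  · calc ‖Complex.exp (θ * Complex.I) - 1‖ ≤ ‖Complex.exp (θ * Complex.I)‖ + ‖(1:ℂ)‖ :=
        norm_sub_le _ _
    _ = 2 := by rw [Complex.norm_exp_ofReal_mul_I]; norm_num
  · have h1 : Complex.exp (θ * Complex.I) - 1 =
        Complex.ofReal (Real.cos θ - 1) + Complex.ofReal (Real.sin θ) * Complex.I := by
      rw [Complex.exp_mul_I]
      push_cast
      ring
    rw [h1, Complex.norm_def, Complex.normSq_add_mul_I]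
    have h2 : (Real.cos θ - 1) ^ 2 + Real.sin θ ^ 2 ≤ θ ^ 2 := by
      have := Real.sin_sq_add_cos_sq θ
      have := Real.one_sub_sq_div_two_le_cos (x := θ)
      nlinarith
    calc Real.sqrt ((Real.cos θ - 1) ^ 2 + Real.sin θ ^ 2) ≤ Real.sqrt (θ ^ 2) :=
        Real.sqrt_le_sqrt h2
    _ = |θ| := Real.sqrt_sq_eq_abs θ

lemma min_le_rpow (γ θ : ℝ) (hγ0 : 0 ≤ γ) (hγ1 : γ ≤ 1) :
    min 2 |θ| ≤ 2 ^ (1 - γ) * |θ| ^ γ := by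
  rcases eq_or_ne θ 0 with h | h
  · simp only [h, abs_zero]
    exact (min_le_right _ _).trans (by positivity)
  · have hθ : 0 < |θ| := abs_pos.2 h
    rcases le_total |θ| 2 with hc | hc
    · have : |θ| = |θ| ^ (1 - γ) * |θ| ^ γ := by
        rw [← Real.rpow_add hθ]; norm_num
      rw [min_eq_right hc]
      calc |θ| = |θ| ^ (1 - γ) * |θ| ^ γ := this
        _ ≤ 2 ^ (1 - γ) * |θ| ^ γ :=
          mul_le_mul_of_nonneg_right (Real.rpow_le_rpow hθ.le hc (sub_nonneg.2 hγ1))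
            (Real.rpow_nonneg hθ.le γ)
    · have : (2:ℝ) = 2 ^ (1 - γ) * 2 ^ γ := by
        rw [← Real.rpow_add (by norm_num)]; norm_num
      rw [min_eq_left hc]
      calc (2:ℝ) = 2 ^ (1 - γ) * 2 ^ γ := this
        _ ≤ 2 ^ (1 - γ) * |θ| ^ γ :=
          mul_le_mul_of_nonneg_left (Real.rpow_le_rpow (by norm_num) hc hγ0) (by positivity)

theorem exp_is_laplacian_sub_one_bound (s γ r : ℝ) (hγ0 : 0 ≤ γ) (hγ1 : γ ≤ 1) (f : ℤ → ℂ)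
    (hf : Summable fun k : ℤ => (1 + (k : ℝ) ^ 2) ^ (r + 2 * γ) * ‖f k‖ ^ 2) :
    ∑' k : ℤ, (1 + (k : ℝ) ^ 2) ^ r *
        ‖Complex.exp (-Complex.I * s * (k : ℂ) ^ 2) - 1‖ ^ 2 * ‖f k‖ ^ 2
      ≤ (2 ^ (1 - γ) * |s| ^ γ) ^ 2 *
        ∑' k : ℤ, (1 + (k : ℝ) ^ 2) ^ (r + 2 * γ) * ‖f k‖ ^ 2 := by
  set c : ℝ := (2 ^ (1 - γ) * |s| ^ γ) ^ 2 with hc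
  have hcnn : 0 ≤ c := sq_nonneg _
  have key : ∀ k : ℤ, (1 + (k : ℝ) ^ 2) ^ r *
      ‖Complex.exp (-Complex.I * s * (k : ℂ) ^ 2) - 1‖ ^ 2 * ‖f k‖ ^ 2
      ≤ c * ((1 + (k : ℝ) ^ 2) ^ (r + 2 * γ) * ‖f k‖ ^ 2) := by
    intro k
    have hbase : (0:ℝ) < 1 + (k : ℝ) ^ 2 := by positivity
    have harg : -Complex.I * s * (k : ℂ) ^ 2 = ((-(s * (k:ℝ)^2) : ℝ) : ℂ) * Complex.I := by
      push_cast; ring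
    have h1 : ‖Complex.exp (-Complex.I * s * (k : ℂ) ^ 2) - 1‖
        ≤ 2 ^ (1 - γ) * |(-(s * (k:ℝ)^2))| ^ γ := by
      rw [harg]
      exact (norm_exp_I_sub_one_le _).trans (min_le_rpow γ _ hγ0 hγ1)
    have h2 : |(-(s * (k:ℝ)^2))| ^ γ ≤ |s| ^ γ * (1 + (k:ℝ)^2) ^ γ := by
      rw [abs_neg, abs_mul, _root_.abs_of_nonneg (sq_nonneg ((k:ℝ))),
        Real.mul_rpow (abs_nonneg s) (sq_nonneg _)]
      gcongr
      linarith
    have h3 : ‖Complex.exp (-Complex.I * s * (k : ℂ) ^ 2) - 1‖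
        ≤ 2 ^ (1 - γ) * |s| ^ γ * (1 + (k:ℝ)^2) ^ γ := by
      calc _ ≤ 2 ^ (1 - γ) * |(-(s * (k:ℝ)^2))| ^ γ := h1
      _ ≤ 2 ^ (1 - γ) * (|s| ^ γ * (1 + (k:ℝ)^2) ^ γ) := by
          gcongr
      _ = _ := by ring
    have h4 : ‖Complex.exp (-Complex.I * s * (k : ℂ) ^ 2) - 1‖ ^ 2
        ≤ c * (1 + (k:ℝ)^2) ^ (2 * γ) := by
      calc ‖Complex.exp (-Complex.I * s * (k : ℂ) ^ 2) - 1‖ ^ 2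
          ≤ (2 ^ (1 - γ) * |s| ^ γ * (1 + (k:ℝ)^2) ^ γ) ^ 2 := by
            exact pow_le_pow_left₀ (norm_nonneg _) h3 2
        _ = c * (1 + (k:ℝ)^2) ^ (2 * γ) := by
            rw [mul_pow, hc]
            congr 1
            rw [← Real.rpow_natCast ((1 + (k:ℝ)^2) ^ γ) 2, ← Real.rpow_mul hbase.le]
            norm_num [mul_comm]
    calc (1 + (k : ℝ) ^ 2) ^ r *
        ‖Complex.exp (-Complex.I * s * (k : ℂ) ^ 2) - 1‖ ^ 2 * ‖f k‖ ^ 2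
        ≤ (1 + (k : ℝ) ^ 2) ^ r * (c * (1 + (k:ℝ)^2) ^ (2 * γ)) * ‖f k‖ ^ 2 := by
          gcongr
      _ = c * ((1 + (k : ℝ) ^ 2) ^ (r + 2 * γ) * ‖f k‖ ^ 2) := by
          rw [Real.rpow_add hbase]; ring
  have hsum : Summable (fun k : ℤ => (1 + (k : ℝ) ^ 2) ^ r *
      ‖Complex.exp (-Complex.I * s * (k : ℂ) ^ 2) - 1‖ ^ 2 * ‖f k‖ ^ 2) := by
    refine Summable.of_nonneg_of_le (fun k => by positivity) key (hf.mul_left c)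
  calc ∑' k : ℤ, (1 + (k : ℝ) ^ 2) ^ r *
        ‖Complex.exp (-Complex.I * s * (k : ℂ) ^ 2) - 1‖ ^ 2 * ‖f k‖ ^ 2
      ≤ ∑' k : ℤ, c * ((1 + (k : ℝ) ^ 2) ^ (r + 2 * γ) * ‖f k‖ ^ 2) :=
        Summable.tsum_le_tsum key hsum (hf.mul_left c)
    _ = c * ∑' k : ℤ, (1 + (k : ℝ) ^ 2) ^ (r + 2 * γ) * ‖f k‖ ^ 2 := tsum_mul_left
end

section
/- For every r ∈ ℝ, every γ with 0 < γ ≤ 1, every τ ≥ 0 and every coefficient sequence f, one has Σ_{l∈ℤ}(1+l²)^r |Σ_{k₁+k₂=l} f̂_{k₁} f̂_{k₂} ∫₀^τ (e^{2isk₁k₂} − 1) ds|² ≤ 4 τ^{2+2γ} Σ_{l∈ℤ}(1+l²)^r (Σ_{k₁+k₂=l} (1+k₁²)^{γ/2} (1+k₂²)^{γ/2} |f̂_{k₁}| |f̂_{k₂}|)², whenever the right-hand side is finite. -/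
open Complex in
lemma aux_exp_norm (x : ℝ) : ‖Complex.exp ((x:ℂ) * Complex.I) - 1‖ ≤ 2 * min 1 |x / 2| := by
  have key : Complex.exp ((x:ℂ) * Complex.I) - 1
      = Complex.exp (((x/2:ℝ):ℂ) * Complex.I) * (2 * Complex.I * Complex.sin ((x/2:ℝ):ℂ)) := by
    rw [Complex.sin]
    have h1 : Complex.exp (((x/2:ℝ):ℂ) * Complex.I) * Complex.exp (((x/2:ℝ):ℂ) * Complex.I)
        = Complex.exp ((x:ℂ) * Complex.I) := by
      rw [← Complex.exp_add]; push_cast; ring_nf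
    have h2 : Complex.exp (((x/2:ℝ):ℂ) * Complex.I) * Complex.exp (-((x/2:ℝ):ℂ) * Complex.I)
        = 1 := by
      rw [← Complex.exp_add]; push_cast; ring_nf; exact Complex.exp_zero
    calc Complex.exp ((x:ℂ) * Complex.I) - 1
        = Complex.exp (((x/2:ℝ):ℂ) * Complex.I) * Complex.exp (((x/2:ℝ):ℂ) * Complex.I)
          - Complex.exp (((x/2:ℝ):ℂ) * Complex.I) * Complex.exp (-((x/2:ℝ):ℂ) * Complex.I) := by
          rw [h1, h2]
      _ = _ := by ring_nf; rw [Complex.I_sq]; ring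
  rw [key, norm_mul]
  have habs : ‖Complex.exp (((x/2:ℝ):ℂ) * Complex.I)‖ = 1 := Complex.norm_exp_ofReal_mul_I _
  rw [habs, one_mul, norm_mul]
  have : ‖Complex.sin ((x/2:ℝ):ℂ)‖ = |Real.sin (x/2)| := by
    rw [← Complex.ofReal_sin, Complex.norm_real, Real.norm_eq_abs]
  rw [this]
  have h2I : ‖(2 * Complex.I : ℂ)‖ = 2 := by simp
  rw [h2I]
  have := Real.abs_sin_le_abs (x := x/2)
  have h1 : |Real.sin (x/2)| ≤ min 1 |x/2| :=
    le_min (by simpa using Real.abs_sin_le_one (x/2)) this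
  nlinarith [abs_nonneg (Real.sin (x/2))]

lemma aux_min (γ : ℝ) (hγ0 : 0 < γ) (hγ1 : γ ≤ 1) (y : ℝ) (hy : 0 ≤ y) :
    min 1 y ≤ y ^ γ := by
  rcases le_or_gt y 1 with h | h
  · rw [min_eq_right h]
    rcases eq_or_lt_of_le hy with h0 | h0
    · simp [← h0, Real.zero_rpow hγ0.ne']
    · calc y = y ^ (1:ℝ) := (Real.rpow_one y).symm
        _ ≤ y ^ γ := Real.rpow_le_rpow_of_exponent_ge h0 h hγ1
  · exact (min_le_left _ _).trans (Real.one_le_rpow h.le hγ0.le)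

lemma aux_integral (γ τ : ℝ) (hγ0 : 0 < γ) (hγ1 : γ ≤ 1) (hτ : 0 ≤ τ) (a b : ℝ) :
    ‖∫ s in (0:ℝ)..τ, (Complex.exp (2 * Complex.I * s * a * b) - 1)‖
      ≤ 2 * τ ^ (1 + γ) * ((1 + a ^ 2) ^ (γ/2) * (1 + b ^ 2) ^ (γ/2)) := by
  have habg : (0:ℝ) ≤ |a * b| ^ γ := Real.rpow_nonneg (abs_nonneg _) _
  have hbound : ∀ s ∈ Set.uIoc (0:ℝ) τ,
      ‖Complex.exp (2 * Complex.I * s * a * b) - 1‖ ≤ (2 * |a*b| ^ γ) * s ^ γ := by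
    intro s hs
    rw [Set.uIoc_of_le hτ] at hs
    have hs0 : 0 < s := hs.1
    have harg : (2 * Complex.I * s * a * b : ℂ) = ((2 * s * a * b : ℝ) : ℂ) * Complex.I := by
      push_cast; ring
    rw [harg]
    calc ‖Complex.exp (((2*s*a*b:ℝ):ℂ) * Complex.I) - 1‖
        ≤ 2 * min 1 |2*s*a*b / 2| := aux_exp_norm _
      _ ≤ 2 * |2*s*a*b/2| ^ γ := by
          have := aux_min γ hγ0 hγ1 |2*s*a*b/2| (abs_nonneg _)
          linarith
      _ = (2 * |a*b| ^ γ) * s ^ γ := by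
          have : |2*s*a*b/2| = s * |a*b| := by
            rw [show (2*s*a*b/2) = s * (a*b) by ring, abs_mul, abs_of_pos hs0]
          rw [this, Real.mul_rpow hs0.le (abs_nonneg _)]; ring
  have hint : IntervalIntegrable (fun s : ℝ => (2 * |a*b| ^ γ) * s ^ γ) MeasureTheory.volume 0 τ :=
    (intervalIntegral.intervalIntegrable_rpow' (by linarith)).const_mul _
  have h1 := intervalIntegral.norm_integral_le_abs_of_norm_le
    (MeasureTheory.ae_restrict_of_forall_mem measurableSet_uIoc hbound) hint
  have hval : (∫ s in (0:ℝ)..τ, (2 * |a*b| ^ γ) * s ^ γ)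
      = (2 * |a*b| ^ γ) * (τ ^ (γ+1) / (γ+1)) := by
    rw [intervalIntegral.integral_const_mul, integral_rpow (Or.inl (by linarith)),
      Real.zero_rpow (by linarith : γ + 1 ≠ 0)]
    ring_nf
  rw [hval, abs_of_nonneg (by positivity)] at h1
  refine h1.trans ?_
  have hτγ : (0:ℝ) ≤ τ ^ (γ+1) := Real.rpow_nonneg hτ _
  have hdiv : τ ^ (γ+1) / (γ+1) ≤ τ ^ (γ+1) := by
    rw [div_le_iff₀ (by linarith)]; nlinarith
  have hab : |a*b| ^ γ ≤ (1 + a ^ 2) ^ (γ/2) * (1 + b ^ 2) ^ (γ/2) := by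
    have e1 : (((a*b)^2 : ℝ)) ^ (γ/2) = |a*b| ^ γ := by
      rw [← sq_abs, ← Real.rpow_natCast |a*b| 2, ← Real.rpow_mul (abs_nonneg _)]
      norm_num
      congr 1
      ring
    rw [← e1, ← Real.mul_rpow (by positivity) (by positivity)]
    apply Real.rpow_le_rpow (by positivity) (by nlinarith [sq_nonneg a, sq_nonneg b]) (by linarith)
  calc (2 * |a*b| ^ γ) * (τ ^ (γ+1) / (γ+1))
      ≤ (2 * |a*b| ^ γ) * τ ^ (γ+1) := by
        apply mul_le_mul_of_nonneg_left hdiv (by positivity)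
    _ ≤ 2 * τ ^ (1 + γ) * ((1 + a ^ 2) ^ (γ/2) * (1 + b ^ 2) ^ (γ/2)) := by
        rw [add_comm γ 1]
        nlinarith [Real.rpow_nonneg hτ (1+γ), mul_le_mul_of_nonneg_left hab (Real.rpow_nonneg hτ (1+γ))]

theorem P1_remainder_bound (r γ τ : ℝ) (hγ0 : 0 < γ) (hγ1 : γ ≤ 1) (hτ : 0 ≤ τ) (f : ℤ → ℂ)
    (hinner : ∀ l : ℤ, Summable fun k : ℤ =>
      (1 + (k : ℝ) ^ 2) ^ (γ / 2) * (1 + ((l - k : ℤ) : ℝ) ^ 2) ^ (γ / 2) * ‖f k‖ * ‖f (l - k)‖)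
    (houter : Summable fun l : ℤ => (1 + (l : ℝ) ^ 2) ^ r *
      (∑' k : ℤ, (1 + (k : ℝ) ^ 2) ^ (γ / 2) * (1 + ((l - k : ℤ) : ℝ) ^ 2) ^ (γ / 2) *
        ‖f k‖ * ‖f (l - k)‖) ^ 2) :
    ∑' l : ℤ, (1 + (l : ℝ) ^ 2) ^ r *
        ‖∑' k : ℤ, f k * f (l - k) *
          ∫ s in (0:ℝ)..τ, (Complex.exp (2 * Complex.I * s * k * (l - k)) - 1)‖ ^ 2
      ≤ 4 * τ ^ (2 + 2 * γ) * ∑' l : ℤ, (1 + (l : ℝ) ^ 2) ^ r *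
        (∑' k : ℤ, (1 + (k : ℝ) ^ 2) ^ (γ / 2) * (1 + ((l - k : ℤ) : ℝ) ^ 2) ^ (γ / 2) *
          ‖f k‖ * ‖f (l - k)‖) ^ 2 := by
  set S : ℤ → ℝ := fun l => ∑' k : ℤ, (1 + (k : ℝ) ^ 2) ^ (γ / 2) *
    (1 + ((l - k : ℤ) : ℝ) ^ 2) ^ (γ / 2) * ‖f k‖ * ‖f (l - k)‖ with hSdef
  have hSnn : ∀ l, 0 ≤ S l := fun l => tsum_nonneg fun k => by positivity
  have hTl : ∀ l : ℤ, ‖∑' k : ℤ, f k * f (l - k) *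
      ∫ s in (0:ℝ)..τ, (Complex.exp (2 * Complex.I * s * k * (l - k)) - 1)‖
      ≤ 2 * τ ^ (1 + γ) * S l := by
    intro l
    apply tsum_of_norm_bounded (((hinner l).hasSum).mul_left (2 * τ ^ (1 + γ)))
    intro k
    rw [norm_mul, norm_mul]
    have hfun : (fun s : ℝ => Complex.exp (2 * Complex.I * s * (k : ℂ) * ((l : ℂ) - k)) - 1)
        = fun s : ℝ => Complex.exp (2 * Complex.I * s * ((k : ℝ) : ℂ) * (((l - k : ℤ) : ℝ) : ℂ))
          - 1 := by
      funext s
      push_cast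
      ring_nf
    have hI := aux_integral γ τ hγ0 hγ1 hτ (k : ℝ) ((l - k : ℤ) : ℝ)
    rw [← hfun] at hI
    calc ‖f k‖ * ‖f (l - k)‖ * ‖∫ s in (0:ℝ)..τ,
          (Complex.exp (2 * Complex.I * s * (k : ℂ) * ((l : ℂ) - k)) - 1)‖
        ≤ ‖f k‖ * ‖f (l - k)‖ * (2 * τ ^ (1 + γ) *
            ((1 + (k : ℝ) ^ 2) ^ (γ/2) * (1 + ((l - k : ℤ) : ℝ) ^ 2) ^ (γ/2))) := by
          apply mul_le_mul_of_nonneg_left hI (by positivity)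
      _ = 2 * τ ^ (1 + γ) * ((1 + (k : ℝ) ^ 2) ^ (γ / 2) *
            (1 + ((l - k : ℤ) : ℝ) ^ 2) ^ (γ / 2) * ‖f k‖ * ‖f (l - k)‖) := by ring
  have hC2 : (2 * τ ^ (1 + γ)) ^ 2 = 4 * τ ^ (2 + 2 * γ) := by
    have h : (1 + γ) * ((2 : ℕ) : ℝ) = 2 + 2 * γ := by push_cast; ring
    rw [mul_pow, ← Real.rpow_natCast (τ ^ (1 + γ)) 2, ← Real.rpow_mul hτ, h]
    norm_num
  have hpt : ∀ l : ℤ, (1 + (l : ℝ) ^ 2) ^ r * ‖∑' k : ℤ, f k * f (l - k) *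
      ∫ s in (0:ℝ)..τ, (Complex.exp (2 * Complex.I * s * k * (l - k)) - 1)‖ ^ 2
      ≤ 4 * τ ^ (2 + 2 * γ) * ((1 + (l : ℝ) ^ 2) ^ r * S l ^ 2) := by
    intro l
    have h1 : ‖∑' k : ℤ, f k * f (l - k) *
        ∫ s in (0:ℝ)..τ, (Complex.exp (2 * Complex.I * s * k * (l - k)) - 1)‖ ^ 2
        ≤ (2 * τ ^ (1 + γ) * S l) ^ 2 := pow_le_pow_left₀ (norm_nonneg _) (hTl l) 2
    calc (1 + (l : ℝ) ^ 2) ^ r * ‖∑' k : ℤ, f k * f (l - k) *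
          ∫ s in (0:ℝ)..τ, (Complex.exp (2 * Complex.I * s * k * (l - k)) - 1)‖ ^ 2
        ≤ (1 + (l : ℝ) ^ 2) ^ r * (2 * τ ^ (1 + γ) * S l) ^ 2 :=
          mul_le_mul_of_nonneg_left h1 (Real.rpow_nonneg (by positivity) r)
      _ = 4 * τ ^ (2 + 2 * γ) * ((1 + (l : ℝ) ^ 2) ^ r * S l ^ 2) := by
          rw [mul_pow, hC2]; ring
  have hsum2 : Summable fun l : ℤ => 4 * τ ^ (2 + 2 * γ) * ((1 + (l : ℝ) ^ 2) ^ r * S l ^ 2) :=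
    houter.mul_left _
  have hsum1 : Summable fun l : ℤ => (1 + (l : ℝ) ^ 2) ^ r * ‖∑' k : ℤ, f k * f (l - k) *
      ∫ s in (0:ℝ)..τ, (Complex.exp (2 * Complex.I * s * k * (l - k)) - 1)‖ ^ 2 :=
    Summable.of_nonneg_of_le (fun l => by positivity) hpt hsum2
  calc ∑' l : ℤ, (1 + (l : ℝ) ^ 2) ^ r * ‖∑' k : ℤ, f k * f (l - k) *
        ∫ s in (0:ℝ)..τ, (Complex.exp (2 * Complex.I * s * k * (l - k)) - 1)‖ ^ 2
      ≤ ∑' l : ℤ, 4 * τ ^ (2 + 2 * γ) * ((1 + (l : ℝ) ^ 2) ^ r * S l ^ 2) :=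
        Summable.tsum_le_tsum hpt hsum1 hsum2
    _ = 4 * τ ^ (2 + 2 * γ) * ∑' l : ℤ, (1 + (l : ℝ) ^ 2) ^ r * S l ^ 2 := tsum_mul_left
end

section
/- Let r > 1/2, c > 0, and let D_r > 0 be a constant such that ‖fg‖_r ≤ D_r ‖f‖_r ‖g‖_r for all f, g ∈ H^r. Define the first-order scheme Φ^τ(f) = e^{iτ⟨∂ₓ²⟩_c} f − (icτ/2)⟨∂ₓ²⟩_c^{-1} e^{iτ⟨∂ₓ²⟩_c} f − (icτ/2)⟨∂ₓ²⟩_c^{-1} e^{iτ⟨∂ₓ²⟩_c} ψ₁(2iτ∂ₓ²) f̄ − (i/4) ∂ₓ² ⟨∂ₓ²⟩_c^{-1} e^{iτ⟨∂ₓ²⟩_c} [I₁^τ(f) + 2 I₂^τ(f) + I₃^τ(f)], where I₁^τ(f) = ∫₀^τ e^{is∂ₓ²}((e^{−is∂ₓ²} f)²) ds, I₂^τ(f) = ∫₀^τ e^{is∂ₓ²}((e^{−is∂ₓ²} f)(conj(e^{−is∂ₓ²} f))) ds, and I₃^τ(f) = τ ψ₁(2iτ∂ₓ²)((f̄)²).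 Then for every τ ≥ 0 and all f, g ∈ H^r one has ‖Φ^τ(f) − Φ^τ(g)‖_r ≤ (1 + Mτ) ‖f − g‖_r, where M = √c + D_r(‖f‖_r + ‖g‖_r). -/
/-- Sobolev norm `‖f‖_m` of a Fourier coefficient sequence. -/
noncomputable def sobNorm (m : ℝ) (f : ℤ → ℂ) : ℝ :=
  Real.sqrt (∑' k : ℤ, (1 + (k : ℝ) ^ 2) ^ m * ‖f k‖ ^ 2)

/-- Membership in `H^m`. -/
def inH (m : ℝ) (f : ℤ → ℂ) : Prop :=
  Summable fun k : ℤ => (1 + (k : ℝ) ^ 2) ^ m * ‖f k‖ ^ 2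

/-- Convolution of coefficient sequences (Fourier coefficients of the product). -/
noncomputable def conv (f g : ℤ → ℂ) : ℤ → ℂ := fun l => ∑' k : ℤ, f k * g (l - k)

/-- Fourier coefficients of the complex conjugate `f̄`. -/
noncomputable def conjSeq (f : ℤ → ℂ) : ℤ → ℂ := fun k => starRingEnd ℂ (f (-k))

/-- `ψ₁(z) = ∫₀¹ e^{zs} ds` -/
noncomputable def psi1 (z : ℂ) : ℂ := ∫ s in (0:ℝ)..1, Complex.exp (z * s)

/-- Fourier coefficients of `I₁^τ(f) = ∫₀^τ e^{is∂ₓ²}((e^{-is∂ₓ²}f)²) ds`. -/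
noncomputable def I1 (τ : ℝ) (f : ℤ → ℂ) : ℤ → ℂ := fun l =>
  ∑' k : ℤ, f k * f (l - k) * ∫ s in (0:ℝ)..τ, Complex.exp (-2 * Complex.I * s * k * (l - k))

/-- Fourier coefficients of `I₂^τ(f) = ∫₀^τ e^{is∂ₓ²}((e^{-is∂ₓ²}f)(conj(e^{-is∂ₓ²}f))) ds`. -/
noncomputable def I2 (τ : ℝ) (f : ℤ → ℂ) : ℤ → ℂ := fun l =>
  ∑' m : ℤ, f (l + m) * starRingEnd ℂ (f m) *
    ∫ s in (0:ℝ)..τ, Complex.exp (2 * Complex.I * s * l * m)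

/-- Fourier coefficients of `I₃^τ(f) = τ ψ₁(2iτ∂ₓ²)((f̄)²)`. -/
noncomputable def I3 (τ : ℝ) (f : ℤ → ℂ) : ℤ → ℂ := fun l =>
  (τ : ℂ) * psi1 (-2 * Complex.I * τ * (l : ℂ) ^ 2) * conv (conjSeq f) (conjSeq f) l

/-- The first-order exponential-type integrator
`Φ^τ(f) = e^{iτ⟨∂ₓ²⟩_c}f − (icτ/2)⟨∂ₓ²⟩_c⁻¹e^{iτ⟨∂ₓ²⟩_c}f
  − (icτ/2)⟨∂ₓ²⟩_c⁻¹e^{iτ⟨∂ₓ²⟩_c}ψ₁(2iτ∂ₓ²)f̄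
  − (i/4)∂ₓ²⟨∂ₓ²⟩_c⁻¹e^{iτ⟨∂ₓ²⟩_c}[I₁^τ(f) + 2I₂^τ(f) + I₃^τ(f)]`, in Fourier coefficients. -/
noncomputable def Phi (c τ : ℝ) (f : ℤ → ℂ) : ℤ → ℂ := fun k =>
  Complex.exp (Complex.I * τ * ((Real.sqrt (c + (k : ℝ) ^ 2 + (k : ℝ) ^ 4) : ℝ) : ℂ)) * f k
  - (Complex.I * c * τ / 2) * (1 / ((Real.sqrt (c + (k : ℝ) ^ 2 + (k : ℝ) ^ 4) : ℝ) : ℂ)) *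
      Complex.exp (Complex.I * τ * ((Real.sqrt (c + (k : ℝ) ^ 2 + (k : ℝ) ^ 4) : ℝ) : ℂ)) * f k
  - (Complex.I * c * τ / 2) * (1 / ((Real.sqrt (c + (k : ℝ) ^ 2 + (k : ℝ) ^ 4) : ℝ) : ℂ)) *
      Complex.exp (Complex.I * τ * ((Real.sqrt (c + (k : ℝ) ^ 2 + (k : ℝ) ^ 4) : ℝ) : ℂ)) *
      psi1 (-2 * Complex.I * τ * (k : ℂ) ^ 2) * conjSeq f k
  - (Complex.I / 4) * ((-(k : ℝ) ^ 2 : ℝ) : ℂ) *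
      (1 / ((Real.sqrt (c + (k : ℝ) ^ 2 + (k : ℝ) ^ 4) : ℝ) : ℂ)) *
      Complex.exp (Complex.I * τ * ((Real.sqrt (c + (k : ℝ) ^ 2 + (k : ℝ) ^ 4) : ℝ) : ℂ)) *
      (I1 τ f k + 2 * I2 τ f k + I3 τ f k)


open scoped ENNReal

namespace PhiAux


noncomputable def W (r : ℝ) (l : ℤ) : ℝ≥0∞ := ENNReal.ofReal ((1 + (l : ℝ) ^ 2) ^ (r / 2))

noncomputable def EN (r : ℝ) (a : ℤ → ℝ≥0∞) : ℝ≥0∞ :=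
  (∑' l : ℤ, (W r l * a l) ^ (2 : ℝ)) ^ (1 / 2 : ℝ)

noncomputable def ee (f : ℤ → ℂ) : ℤ → ℝ≥0∞ := fun k => ENNReal.ofReal ‖f k‖

lemma one_le_base (l : ℤ) : (1 : ℝ) ≤ 1 + (l : ℝ) ^ 2 := le_add_of_nonneg_right (sq_nonneg _)

lemma base_pos (l : ℤ) : (0 : ℝ) < 1 + (l : ℝ) ^ 2 := by positivity

lemma sq_half_rpow (r : ℝ) (l : ℤ) :
    ((1 + (l : ℝ) ^ 2) ^ (r / 2)) ^ 2 = (1 + (l : ℝ) ^ 2) ^ r := by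
  rw [← Real.rpow_natCast ((1 + (l : ℝ) ^ 2) ^ (r / 2)) 2, ← Real.rpow_mul (base_pos l).le]
  norm_num

lemma term_eq (r : ℝ) (f : ℤ → ℂ) (l : ℤ) :
    (W r l * ee f l) ^ (2 : ℝ) = ENNReal.ofReal ((1 + (l : ℝ) ^ 2) ^ r * ‖f l‖ ^ 2) := by
  rw [W, ee, ← ENNReal.ofReal_mul (by positivity),
    ENNReal.ofReal_rpow_of_nonneg (by positivity) (by norm_num : (0:ℝ) ≤ 2)]
  congr 1
  rw [Real.rpow_two, mul_pow, sq_half_rpow]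

lemma tsum_ofReal_eq_top {s : ℤ → ℝ} (hs : ∀ k, 0 ≤ s k) (h : ¬ Summable s) :
    (∑' k, ENNReal.ofReal (s k)) = ∞ := by
  by_contra h'
  have h2 : Summable fun k => (s k).toNNReal := by
    rw [← ENNReal.tsum_coe_ne_top_iff_summable]
    simpa [ENNReal.ofReal] using h'
  apply h
  have := NNReal.summable_coe.2 h2
  simpa [Real.coe_toNNReal _ (hs _)] using this

lemma EN_sum_eq (r : ℝ) (f : ℤ → ℂ) (h : inH r f) :
    (∑' l : ℤ, (W r l * ee f l) ^ (2 : ℝ))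
      = ENNReal.ofReal (∑' l : ℤ, (1 + (l : ℝ) ^ 2) ^ r * ‖f l‖ ^ 2) := by
  simp_rw [term_eq]
  rw [ENNReal.ofReal_tsum_of_nonneg (fun l => by positivity) h]

lemma EN_eq_ofReal {r : ℝ} {f : ℤ → ℂ} (h : inH r f) :
    EN r (ee f) = ENNReal.ofReal (sobNorm r f) := by
  rw [EN, EN_sum_eq r f h, sobNorm, Real.sqrt_eq_rpow,
    ENNReal.ofReal_rpow_of_nonneg (tsum_nonneg fun l => by positivity) (by norm_num)]

lemma EN_ne_top {r : ℝ} {f : ℤ → ℂ} (h : inH r f) : EN r (ee f) ≠ ∞ := by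
  rw [EN_eq_ofReal h]; exact ENNReal.ofReal_ne_top

lemma sobNorm_eq_toReal (r : ℝ) (f : ℤ → ℂ) : sobNorm r f = (EN r (ee f)).toReal := by
  by_cases h : inH r f
  · rw [EN_eq_ofReal h, sobNorm, ENNReal.toReal_ofReal (Real.sqrt_nonneg _)]
  · rw [sobNorm, tsum_eq_zero_of_not_summable h, Real.sqrt_zero, EN]
    have : (∑' l : ℤ, (W r l * ee f l) ^ (2 : ℝ)) = ∞ := by
      simp_rw [term_eq]
      exact tsum_ofReal_eq_top (fun l => by positivity) h
    rw [this, ENNReal.top_rpow_of_pos (by norm_num), ENNReal.toReal_top]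


open scoped ENNReal


variable {r : ℝ}

lemma EN_mono {a b : ℤ → ℝ≥0∞} (h : ∀ k, a k ≤ b k) : EN r a ≤ EN r b := by
  apply ENNReal.rpow_le_rpow _ (by norm_num)
  exact ENNReal.tsum_le_tsum fun l =>
    ENNReal.rpow_le_rpow (mul_le_mul_right (h l) _) (by norm_num)

lemma EN_add (a b : ℤ → ℝ≥0∞) : EN r (fun k => a k + b k) ≤ EN r a + EN r b := by
  rw [EN]
  have key : (∑' l : ℤ, (W r l * (a l + b l)) ^ (2 : ℝ)) ≤ (EN r a + EN r b) ^ (2 : ℝ) := by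
    rw [ENNReal.tsum_eq_iSup_sum]
    apply iSup_le
    intro s
    have h1 : (∑ l ∈ s, (W r l * (a l + b l)) ^ (2 : ℝ)) ^ (1 / 2 : ℝ)
        ≤ EN r a + EN r b := by
      have := ENNReal.Lp_add_le s (fun l => W r l * a l) (fun l => W r l * b l)
        (by norm_num : (1:ℝ) ≤ 2)
      simp_rw [← mul_add] at this
      refine le_trans this (add_le_add ?_ ?_) <;>
        exact ENNReal.rpow_le_rpow (ENNReal.sum_le_tsum s) (by norm_num)
    calc (∑ l ∈ s, (W r l * (a l + b l)) ^ (2 : ℝ))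
        = ((∑ l ∈ s, (W r l * (a l + b l)) ^ (2 : ℝ)) ^ (1 / 2 : ℝ)) ^ (2 : ℝ) := by
          rw [← ENNReal.rpow_mul]; norm_num
      _ ≤ (EN r a + EN r b) ^ (2 : ℝ) := ENNReal.rpow_le_rpow h1 (by norm_num)
  calc (∑' l : ℤ, (W r l * (a l + b l)) ^ (2 : ℝ)) ^ (1 / 2 : ℝ)
      ≤ ((EN r a + EN r b) ^ (2 : ℝ)) ^ (1 / 2 : ℝ) := ENNReal.rpow_le_rpow key (by norm_num)
    _ = EN r a + EN r b := by rw [← ENNReal.rpow_mul]; norm_num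

lemma EN_const_mul (C : ℝ≥0∞) (a : ℤ → ℝ≥0∞) : EN r (fun k => C * a k) = C * EN r a := by
  rw [EN, EN]
  have : ∀ l : ℤ, (W r l * (C * a l)) ^ (2 : ℝ) = C ^ (2 : ℝ) * (W r l * a l) ^ (2 : ℝ) := by
    intro l
    rw [show W r l * (C * a l) = C * (W r l * a l) by ring,
      ENNReal.mul_rpow_of_nonneg _ _ (by norm_num : (0:ℝ) ≤ 2)]
  simp_rw [this]
  rw [ENNReal.tsum_mul_left, ENNReal.mul_rpow_of_nonneg _ _ (by norm_num : (0:ℝ) ≤ 1/2),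
    ← ENNReal.rpow_mul]
  norm_num

lemma W_neg (l : ℤ) : W r (-l) = W r l := by
  simp [W]

lemma EN_comp_neg (a : ℤ → ℝ≥0∞) : EN r (fun k => a (-k)) = EN r a := by
  rw [EN, EN]
  congr 1
  rw [← (Equiv.neg ℤ).tsum_eq (fun l => (W r l * a l) ^ (2 : ℝ))]
  exact tsum_congr fun l => by simp [W_neg]

lemma ee_conjSeq (f : ℤ → ℂ) (k : ℤ) : ee (conjSeq f) k = ee f (-k) := by
  simp [ee, conjSeq]

lemma EN_ee_conjSeq (f : ℤ → ℂ) : EN r (ee (conjSeq f)) = EN r (ee f) := by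
  calc EN r (ee (conjSeq f)) = EN r (fun k => ee f (-k)) := by
        congr 1; funext k; exact ee_conjSeq f k
    _ = EN r (ee f) := EN_comp_neg _


variable {r : ℝ}

lemma sobNorm_nonneg (r : ℝ) (f : ℤ → ℂ) : 0 ≤ sobNorm r f := Real.sqrt_nonneg _

lemma one_le_weight (hr : 0 ≤ r) (k : ℤ) : (1 : ℝ) ≤ (1 + (k : ℝ) ^ 2) ^ r := by
  have := Real.rpow_le_rpow_of_exponent_le (one_le_base k) hr (y := 0)
  rwa [Real.rpow_zero] at this

lemma l2_of_inH (hr : 0 ≤ r) {f : ℤ → ℂ} (hf : inH r f) :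
    Summable fun k : ℤ => ‖f k‖ ^ 2 := by
  refine Summable.of_nonneg_of_le (fun k => by positivity) (fun k => ?_) hf
  calc ‖f k‖ ^ 2 = 1 * ‖f k‖ ^ 2 := (one_mul _).symm
    _ ≤ (1 + (k : ℝ) ^ 2) ^ r * ‖f k‖ ^ 2 :=
      mul_le_mul_of_nonneg_right (one_le_weight hr k) (by positivity)

lemma inH_of_le {f g : ℤ → ℂ} (h : ∀ k, ‖f k‖ ≤ ‖g k‖) (hg : inH r g) : inH r f := by
  refine Summable.of_nonneg_of_le (fun k => by positivity) (fun k => ?_) hg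
  exact mul_le_mul_of_nonneg_left (by nlinarith [h k, norm_nonneg (f k), norm_nonneg (g k)])
    (by positivity)

lemma inH_sub {f g : ℤ → ℂ} (hf : inH r f) (hg : inH r g) :
    inH r (fun k => f k - g k) := by
  refine Summable.of_nonneg_of_le (fun k => by positivity) (fun k => ?_)
    ((hf.mul_left 2).add (hg.mul_left 2))
  have h1 : ‖f k - g k‖ ≤ ‖f k‖ + ‖g k‖ := norm_sub_le _ _
  have h2 : ‖f k - g k‖ ^ 2 ≤ 2 * ‖f k‖ ^ 2 + 2 * ‖g k‖ ^ 2 := by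
    have h1' : ‖f k - g k‖ ^ 2 ≤ (‖f k‖ + ‖g k‖) ^ 2 :=
      pow_le_pow_left₀ (norm_nonneg _) h1 2
    nlinarith [sq_nonneg (‖f k‖ - ‖g k‖)]
  have hw : (0 : ℝ) ≤ (1 + (k : ℝ) ^ 2) ^ r := by positivity
  calc (1 + (k : ℝ) ^ 2) ^ r * ‖f k - g k‖ ^ 2
      ≤ (1 + (k : ℝ) ^ 2) ^ r * (2 * ‖f k‖ ^ 2 + 2 * ‖g k‖ ^ 2) :=
        mul_le_mul_of_nonneg_left h2 hw
    _ = 2 * ((1 + (k : ℝ) ^ 2) ^ r * ‖f k‖ ^ 2) + 2 * ((1 + (k : ℝ) ^ 2) ^ r * ‖g k‖ ^ 2) := by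
        ring

lemma inH_comp_neg {f : ℤ → ℂ} (hf : inH r f) : inH r (fun k => f (-k)) := by
  have := (Equiv.neg ℤ).summable_iff.mpr hf
  refine this.congr fun k => ?_
  simp [Function.comp]

lemma inH_conjSeq {f : ℤ → ℂ} (hf : inH r f) : inH r (conjSeq f) := by
  have := inH_comp_neg hf
  refine this.congr fun k => ?_
  simp [conjSeq]

lemma sobNorm_comp_neg (f : ℤ → ℂ) : sobNorm r (fun k => f (-k)) = sobNorm r f := by
  rw [sobNorm, sobNorm]
  congr 1
  rw [← (Equiv.neg ℤ).tsum_eq (fun k => (1 + (k : ℝ) ^ 2) ^ r * ‖f k‖ ^ 2)]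
  exact tsum_congr fun k => by simp

lemma sobNorm_conjSeq (f : ℤ → ℂ) : sobNorm r (conjSeq f) = sobNorm r f := by
  rw [← sobNorm_comp_neg f]
  rw [sobNorm, sobNorm]
  exact congrArg _ (tsum_congr fun k => by simp [conjSeq])

lemma conjSeq_sub (f g : ℤ → ℂ) :
    (fun k => conjSeq f k - conjSeq g k) = conjSeq (fun k => f k - g k) := by
  funext k; simp [conjSeq]

lemma summable_mul_shift {a b : ℤ → ℂ} (ha : Summable fun k : ℤ => ‖a k‖ ^ 2)
    (hb : Summable fun k : ℤ => ‖b k‖ ^ 2) (l : ℤ) :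
    Summable fun k : ℤ => ‖a k‖ * ‖b (l - k)‖ := by
  have hb' : Summable fun k : ℤ => ‖b (l - k)‖ ^ 2 :=
    ((Equiv.subLeft l).summable_iff.mpr hb).congr fun k => by simp [Function.comp, Equiv.subLeft]
  refine Summable.of_nonneg_of_le (fun k => by positivity) (fun k => ?_) (ha.add hb')
  nlinarith [norm_nonneg (a k), norm_nonneg (b (l - k)), sq_nonneg (‖a k‖ - ‖b (l - k)‖)]

lemma summable_mul_shift' {a b : ℤ → ℂ} (ha : Summable fun k : ℤ => ‖a k‖ ^ 2)
    (hb : Summable fun k : ℤ => ‖b k‖ ^ 2) (l : ℤ) :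
    Summable fun m : ℤ => ‖a (l + m)‖ * ‖b m‖ := by
  have ha' : Summable fun m : ℤ => ‖a (l + m)‖ ^ 2 :=
    ((Equiv.addLeft l).summable_iff.mpr ha).congr fun k => by simp [Function.comp, Equiv.addLeft]
  refine Summable.of_nonneg_of_le (fun k => by positivity) (fun k => ?_) (ha'.add hb)
  nlinarith [norm_nonneg (a (l + k)), norm_nonneg (b k), sq_nonneg (‖a (l + k)‖ - ‖b k‖)]

noncomputable def econv (a b : ℤ → ℝ≥0∞) : ℤ → ℝ≥0∞ := fun l => ∑' k : ℤ, a k * b (l - k)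

lemma ofReal_tsum_prod (a b : ℤ → ℂ) (l : ℤ)
    (h : Summable fun k : ℤ => ‖a k‖ * ‖b (l - k)‖) :
    ENNReal.ofReal (∑' k : ℤ, ‖a k‖ * ‖b (l - k)‖) = econv (ee a) (ee b) l := by
  rw [ENNReal.ofReal_tsum_of_nonneg (fun k => by positivity) h]
  exact tsum_congr fun k => (ENNReal.ofReal_mul (norm_nonneg _))

lemma ofReal_tsum_prod' (a b : ℤ → ℂ) (l : ℤ)
    (h : Summable fun m : ℤ => ‖a (l + m)‖ * ‖b m‖) :
    ENNReal.ofReal (∑' m : ℤ, ‖a (l + m)‖ * ‖b m‖)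
      = econv (ee a) (ee fun j => b (-j)) l := by
  rw [ENNReal.ofReal_tsum_of_nonneg (fun k => by positivity) h, econv,
    ← (Equiv.addLeft l).tsum_eq (fun k => ee a k * ee (fun j => b (-j)) (l - k))]
  refine tsum_congr fun m => ?_
  have : l - (l + m) = -m := by ring
  simp only [Equiv.coe_addLeft, this, ee, neg_neg]
  exact ENNReal.ofReal_mul (norm_nonneg (a (l + m)))



variable {r : ℝ}

noncomputable def truncR (f : ℤ → ℂ) (N : ℕ) : ℤ → ℝ := fun k =>
  if k ∈ Finset.Icc (-(N : ℤ)) (N : ℤ) then ‖f k‖ else 0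

noncomputable def trunc (f : ℤ → ℂ) (N : ℕ) : ℤ → ℂ := fun k => ((truncR f N k : ℝ) : ℂ)

lemma truncR_nonneg (f : ℤ → ℂ) (N : ℕ) (k : ℤ) : 0 ≤ truncR f N k := by
  rw [truncR]; split_ifs <;> positivity

lemma norm_trunc (f : ℤ → ℂ) (N : ℕ) (k : ℤ) : ‖trunc f N k‖ = truncR f N k := by
  rw [trunc, Complex.norm_real, Real.norm_eq_abs, abs_of_nonneg (truncR_nonneg f N k)]

lemma norm_trunc_le (f : ℤ → ℂ) (N : ℕ) (k : ℤ) : ‖trunc f N k‖ ≤ ‖f k‖ := by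
  rw [norm_trunc, truncR]; split_ifs <;> simp [norm_nonneg]

lemma ee_trunc (f : ℤ → ℂ) (N : ℕ) (k : ℤ) :
    ee (trunc f N) k = ENNReal.ofReal (truncR f N k) := by
  rw [ee, norm_trunc]

lemma trunc_zero_of_not_mem (f : ℤ → ℂ) (N : ℕ) {k : ℤ}
    (h : k ∉ Finset.Icc (-(N : ℤ)) (N : ℤ)) : trunc f N k = 0 := by
  rw [trunc, truncR, if_neg h, Complex.ofReal_zero]

lemma inH_trunc (f : ℤ → ℂ) (N : ℕ) : inH r (trunc f N) := by
  apply summable_of_ne_finset_zero (s := Finset.Icc (-(N : ℤ)) (N : ℤ))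
  intro k hk
  rw [trunc_zero_of_not_mem f N hk]
  simp

lemma sobNorm_trunc_le {f : ℤ → ℂ} (hf : inH r f) (N : ℕ) :
    sobNorm r (trunc f N) ≤ sobNorm r f := by
  apply Real.sqrt_le_sqrt
  refine Summable.tsum_le_tsum (fun k => ?_) (inH_trunc f N) hf
  have := norm_trunc_le f N k
  have h2 : ‖trunc f N k‖ ^ 2 ≤ ‖f k‖ ^ 2 := pow_le_pow_left₀ (norm_nonneg _) this 2
  exact mul_le_mul_of_nonneg_left h2 (by positivity)

lemma econv_trunc_mono {f g : ℤ → ℂ} (l : ℤ) :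
    Monotone fun N => econv (ee (trunc f N)) (ee (trunc g N)) l := by
  intro N M hNM
  refine ENNReal.tsum_le_tsum fun k => ?_
  refine mul_le_mul' ?_ ?_ <;>
  · rw [ee_trunc, ee_trunc, truncR, truncR]
    split_ifs with h1 h2 <;> simp_all [Finset.mem_Icc] <;> omega

lemma econv_trunc_le {f g : ℤ → ℂ} (l : ℤ) (N : ℕ) :
    econv (ee (trunc f N)) (ee (trunc g N)) l ≤ econv (ee f) (ee g) l := by
  refine ENNReal.tsum_le_tsum fun k => ?_
  refine mul_le_mul' ?_ ?_ <;>
  · rw [ee_trunc, truncR, ee]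
    split_ifs <;> simp [ENNReal.ofReal_le_ofReal, norm_nonneg]

lemma econv_eq_iSup_trunc {f g : ℤ → ℂ} (l : ℤ) :
    econv (ee f) (ee g) l = ⨆ N : ℕ, econv (ee (trunc f N)) (ee (trunc g N)) l := by
  refine le_antisymm ?_ (iSup_le fun N => econv_trunc_le l N)
  rw [econv, ENNReal.tsum_eq_iSup_sum]
  apply iSup_le
  intro s
  set N : ℕ := s.sup fun k => max k.natAbs (l - k).natAbs with hN
  have hmem : ∀ k ∈ s, (k ∈ Finset.Icc (-(N : ℤ)) (N : ℤ))
      ∧ (l - k ∈ Finset.Icc (-(N : ℤ)) (N : ℤ)) := by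
    intro k hk
    have h1 : max k.natAbs (l - k).natAbs ≤ N :=
      hN ▸ Finset.le_sup (f := fun k => max k.natAbs (l - k).natAbs) hk
    have h2 : k.natAbs ≤ N := le_trans (le_max_left _ _) h1
    have h3 : (l - k).natAbs ≤ N := le_trans (le_max_right _ _) h1
    constructor <;> rw [Finset.mem_Icc] <;> omega
  have heq : (∑ k ∈ s, ee f k * ee g (l - k))
      = ∑ k ∈ s, ee (trunc f N) k * ee (trunc g N) (l - k) := by
    refine Finset.sum_congr rfl fun k hk => ?_
    rw [ee_trunc, ee_trunc, truncR, truncR, if_pos (hmem k hk).1, if_pos (hmem k hk).2, ee, ee]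
  rw [heq]
  exact le_trans (ENNReal.sum_le_tsum s) (le_iSup
    (fun N : ℕ => econv (ee (trunc f N)) (ee (trunc g N)) l) N)

lemma iSup_rpow_two {d : ℕ → ℝ≥0∞} (hd : Monotone d) :
    (⨆ N, d N) ^ (2 : ℝ) = ⨆ N, d N ^ (2 : ℝ) := by
  have hsq : ∀ x : ℝ≥0∞, x ^ (2 : ℝ) = x * x := by
    intro x
    rw [show (2 : ℝ) = ((2 : ℕ) : ℝ) by norm_num, ENNReal.rpow_natCast, sq]
  simp_rw [hsq]
  rw [ENNReal.mul_iSup]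
  simp_rw [ENNReal.iSup_mul]
  apply le_antisymm
  · refine iSup_le fun N => iSup_le fun M => ?_
    calc d M * d N ≤ d (max N M) * d (max N M) :=
          mul_le_mul' (hd (le_max_right _ _)) (hd (le_max_left _ _))
      _ ≤ ⨆ K, d K * d K := le_iSup (fun K => d K * d K) (max N M)
  · refine iSup_le fun K => ?_
    exact le_trans (le_iSup (fun M => d M * d K) K) (le_iSup (fun N => ⨆ M, d M * d N) K)



variable {r : ℝ}

lemma conv_trunc_eq_sum (f g : ℤ → ℂ) (N : ℕ) (l : ℤ) :
    conv (trunc f N) (trunc g N) l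
      = ∑ k ∈ Finset.Icc (-(N : ℤ)) (N : ℤ), trunc f N k * trunc g N (l - k) :=
  tsum_eq_sum fun k hk => by rw [trunc_zero_of_not_mem f N hk, zero_mul]

lemma econv_trunc_eq (f g : ℤ → ℂ) (N : ℕ) (l : ℤ) :
    econv (ee (trunc f N)) (ee (trunc g N)) l = ee (conv (trunc f N) (trunc g N)) l := by
  have hnn : ∀ k : ℤ, 0 ≤ truncR f N k * truncR g N (l - k) := fun k =>
    mul_nonneg (truncR_nonneg f N k) (truncR_nonneg g N (l - k))
  have h1 : econv (ee (trunc f N)) (ee (trunc g N)) l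
      = ∑ k ∈ Finset.Icc (-(N : ℤ)) (N : ℤ),
          ENNReal.ofReal (truncR f N k * truncR g N (l - k)) := by
    rw [econv, tsum_eq_sum (s := Finset.Icc (-(N : ℤ)) (N : ℤ)) (fun k hk => by
      rw [ee_trunc, truncR, if_neg hk, ENNReal.ofReal_zero, zero_mul])]
    exact Finset.sum_congr rfl fun k _ => by
      rw [ee_trunc, ee_trunc, ENNReal.ofReal_mul (truncR_nonneg f N k)]
  have h2 : (∑ k ∈ Finset.Icc (-(N : ℤ)) (N : ℤ), trunc f N k * trunc g N (l - k))
      = ((∑ k ∈ Finset.Icc (-(N : ℤ)) (N : ℤ), truncR f N k * truncR g N (l - k) : ℝ) : ℂ) := by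
    simp only [trunc]
    norm_cast
  rw [h1, ee, conv_trunc_eq_sum, h2, Complex.norm_real, Real.norm_eq_abs,
    abs_of_nonneg (Finset.sum_nonneg fun k _ => hnn k),
    ENNReal.ofReal_sum_of_nonneg fun k _ => hnn k]

lemma conv_trunc_zero (f g : ℤ → ℂ) (N : ℕ) {l : ℤ}
    (hl : l ∉ Finset.Icc (-(2 * (N : ℤ))) (2 * (N : ℤ))) :
    conv (trunc f N) (trunc g N) l = 0 := by
  rw [conv]
  convert tsum_zero with k
  by_cases h : k ∈ Finset.Icc (-(N : ℤ)) (N : ℤ)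
  · have h2 : l - k ∉ Finset.Icc (-(N : ℤ)) (N : ℤ) := by
      simp only [Finset.mem_Icc] at *
      omega
    rw [trunc_zero_of_not_mem g N h2, mul_zero]
  · rw [trunc_zero_of_not_mem f N h, zero_mul]

lemma inH_conv_trunc (f g : ℤ → ℂ) (N : ℕ) : inH r (conv (trunc f N) (trunc g N)) := by
  apply summable_of_ne_finset_zero (s := Finset.Icc (-(2 * (N : ℤ))) (2 * (N : ℤ)))
  intro l hl
  rw [conv_trunc_zero f g N hl]
  simp

lemma conv_bound (hr0 : 0 ≤ r) {Dr : ℝ} (hDr : 0 ≤ Dr)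
    (hbil : ∀ f g : ℤ → ℂ, inH r f → inH r g →
      sobNorm r (conv f g) ≤ Dr * sobNorm r f * sobNorm r g)
    {f g : ℤ → ℂ} (hf : inH r f) (hg : inH r g) :
    EN r (econv (ee f) (ee g)) ≤ ENNReal.ofReal (Dr * sobNorm r f * sobNorm r g) := by
  set B := ENNReal.ofReal (Dr * sobNorm r f * sobNorm r g) with hB
  have perN : ∀ N : ℕ,
      (∑' l : ℤ, (W r l * econv (ee (trunc f N)) (ee (trunc g N)) l) ^ (2 : ℝ))
        ≤ B ^ (2 : ℝ) := by
    intro N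
    have h1 : EN r (ee (conv (trunc f N) (trunc g N))) ≤ B := by
      rw [EN_eq_ofReal (inH_conv_trunc f g N), hB]
      apply ENNReal.ofReal_le_ofReal
      refine le_trans (hbil _ _ (inH_trunc f N) (inH_trunc g N)) ?_
      have t1 := sobNorm_trunc_le (r := r) hf N
      have t2 := sobNorm_trunc_le (r := r) hg N
      have n1 := sobNorm_nonneg r (trunc f N)
      have n2 := sobNorm_nonneg r (trunc g N)
      have n3 := sobNorm_nonneg r f
      exact mul_le_mul (mul_le_mul_of_nonneg_left t1 hDr) t2 n2 (mul_nonneg hDr n3)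
    have h2 : (∑' l : ℤ, (W r l * econv (ee (trunc f N)) (ee (trunc g N)) l) ^ (2 : ℝ))
        = (EN r (ee (conv (trunc f N) (trunc g N)))) ^ (2 : ℝ) := by
      rw [EN, ← ENNReal.rpow_mul]
      norm_num
      exact tsum_congr fun l => by rw [econv_trunc_eq]
    rw [h2]
    exact ENNReal.rpow_le_rpow h1 (by norm_num)
  have key : (∑' l : ℤ, (W r l * econv (ee f) (ee g) l) ^ (2 : ℝ)) ≤ B ^ (2 : ℝ) := by
    have hrw : ∀ l : ℤ, (W r l * econv (ee f) (ee g) l) ^ (2 : ℝ)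
        = ⨆ N : ℕ, (W r l * econv (ee (trunc f N)) (ee (trunc g N)) l) ^ (2 : ℝ) := by
      intro l
      rw [econv_eq_iSup_trunc l, ENNReal.mul_iSup,
        iSup_rpow_two (fun N M h => mul_le_mul_right (econv_trunc_mono l h) _)]
    simp_rw [hrw]
    rw [ENNReal.tsum_eq_iSup_sum]
    apply iSup_le
    intro s
    rw [ENNReal.finsetSum_iSup_of_monotone
      (f := fun (a : ℤ) (N : ℕ) =>
        (W r a * econv (ee (trunc f N)) (ee (trunc g N)) a) ^ (2 : ℝ))
      (fun l N M h =>
        ENNReal.rpow_le_rpow (mul_le_mul_right (econv_trunc_mono l h) _)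
          (by norm_num : (0:ℝ) ≤ 2))]
    exact iSup_le fun N => le_trans (ENNReal.sum_le_tsum s) (perN N)
  rw [EN]
  calc (∑' l : ℤ, (W r l * econv (ee f) (ee g) l) ^ (2 : ℝ)) ^ (1 / 2 : ℝ)
      ≤ (B ^ (2 : ℝ)) ^ (1 / 2 : ℝ) := ENNReal.rpow_le_rpow key (by norm_num)
    _ = B := by rw [← ENNReal.rpow_mul]; norm_num



variable {r : ℝ}

lemma norm_exp_I_mul_real (x : ℝ) : ‖Complex.exp (Complex.I * x)‖ = 1 := by
  rw [Complex.norm_exp]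
  simp

lemma key_int {τ : ℝ} (hτ : 0 ≤ τ) (F : ℝ → ℂ)
    (hF : ∀ s : ℝ, ∃ x : ℝ, F s = Complex.exp (Complex.I * x)) :
    ‖∫ s in (0:ℝ)..τ, F s‖ ≤ τ := by
  have h := intervalIntegral.norm_integral_le_of_norm_le_const (C := 1) (f := F)
    (a := (0:ℝ)) (b := τ) (fun s _ => by
      obtain ⟨x, hx⟩ := hF s
      rw [hx, norm_exp_I_mul_real])
  simpa [abs_of_nonneg hτ] using h

lemma norm_psi1_le (x : ℝ) : ‖psi1 (Complex.I * x)‖ ≤ 1 := by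
  rw [psi1]
  have h := intervalIntegral.norm_integral_le_of_norm_le_const (C := 1)
    (f := fun s : ℝ => Complex.exp (Complex.I * x * s)) (a := (0:ℝ)) (b := 1)
    (fun s _ => by
      have : Complex.I * (x:ℂ) * (s:ℂ) = Complex.I * ((x * s : ℝ) : ℂ) := by push_cast; ring
      rw [this, norm_exp_I_mul_real])
  simpa using h

lemma l2_sub {a b : ℤ → ℂ} (ha : Summable fun k : ℤ => ‖a k‖ ^ 2)
    (hb : Summable fun k : ℤ => ‖b k‖ ^ 2) :
    Summable fun k : ℤ => ‖a k - b k‖ ^ 2 := by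
  refine Summable.of_nonneg_of_le (fun k => by positivity) (fun k => ?_)
    ((ha.mul_left 2).add (hb.mul_left 2))
  have h1 : ‖a k - b k‖ ^ 2 ≤ (‖a k‖ + ‖b k‖) ^ 2 :=
    pow_le_pow_left₀ (norm_nonneg _) (norm_sub_le _ _) 2
  nlinarith [sq_nonneg (‖a k‖ - ‖b k‖)]

lemma l2_conjSeq {a : ℤ → ℂ} (ha : Summable fun k : ℤ => ‖a k‖ ^ 2) :
    Summable fun k : ℤ => ‖conjSeq a k‖ ^ 2 := by
  have := (Equiv.neg ℤ).summable_iff.mpr ha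
  refine this.congr fun k => ?_
  simp [conjSeq, Function.comp]

/-- Main generic bound for differences of weighted convolution-type sums. -/
lemma weighted_diff_bound {a b a' b' : ℤ → ℂ}
    (l2a : Summable fun k : ℤ => ‖a k‖ ^ 2) (l2b : Summable fun k : ℤ => ‖b k‖ ^ 2)
    (l2a' : Summable fun k : ℤ => ‖a' k‖ ^ 2) (l2b' : Summable fun k : ℤ => ‖b' k‖ ^ 2)
    {w : ℤ → ℂ} {C : ℝ} (hC : 0 ≤ C) (hw : ∀ k, ‖w k‖ ≤ C) (l : ℤ) :
    ‖(∑' k : ℤ, a k * b (l - k) * w k) - ∑' k : ℤ, a' k * b' (l - k) * w k‖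
      ≤ C * ((∑' k : ℤ, ‖a k - a' k‖ * ‖b (l - k)‖)
          + ∑' k : ℤ, ‖a' k‖ * ‖b (l - k) - b' (l - k)‖) := by
  have l2Δa : Summable fun k : ℤ => ‖a k - a' k‖ ^ 2 := l2_sub l2a l2a'
  have l2Δb : Summable fun k : ℤ => ‖b k - b' k‖ ^ 2 := l2_sub l2b l2b'
  have sA : Summable fun k : ℤ => ‖a k - a' k‖ * ‖b (l - k)‖ :=
    summable_mul_shift l2Δa l2b l
  have sB : Summable fun k : ℤ => ‖a' k‖ * ‖b (l - k) - b' (l - k)‖ := by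
    have := summable_mul_shift l2a' l2Δb l
    exact this.congr fun k => rfl
  have sum_maj : Summable fun k : ℤ =>
      C * (‖a k - a' k‖ * ‖b (l - k)‖ + ‖a' k‖ * ‖b (l - k) - b' (l - k)‖) :=
    (sA.add sB).mul_left C
  have hb : ∀ k : ℤ, ‖a k * b (l - k) * w k - a' k * b' (l - k) * w k‖
      ≤ C * (‖a k - a' k‖ * ‖b (l - k)‖ + ‖a' k‖ * ‖b (l - k) - b' (l - k)‖) := by
    intro k
    have hd : a k * b (l - k) * w k - a' k * b' (l - k) * w k
        = ((a k - a' k) * b (l - k) + a' k * (b (l - k) - b' (l - k))) * w k := by ring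
    rw [hd, norm_mul]
    calc ‖(a k - a' k) * b (l - k) + a' k * (b (l - k) - b' (l - k))‖ * ‖w k‖
        ≤ (‖a k - a' k‖ * ‖b (l - k)‖ + ‖a' k‖ * ‖b (l - k) - b' (l - k)‖) * C := by
          apply mul_le_mul _ (hw k) (norm_nonneg _) (by positivity)
          exact le_trans (norm_add_le _ _) (by rw [norm_mul, norm_mul])
      _ = C * (‖a k - a' k‖ * ‖b (l - k)‖ + ‖a' k‖ * ‖b (l - k) - b' (l - k)‖) :=
          mul_comm _ _
  have sum_ab : Summable fun k : ℤ => a k * b (l - k) * w k := by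
    apply Summable.of_norm
    refine Summable.of_nonneg_of_le (fun k => norm_nonneg _) (fun k => ?_)
      ((summable_mul_shift l2a l2b l).mul_right C)
    rw [norm_mul, norm_mul]
    exact mul_le_mul_of_nonneg_left (hw k) (by positivity)
  have sum_ab' : Summable fun k : ℤ => a' k * b' (l - k) * w k := by
    apply Summable.of_norm
    refine Summable.of_nonneg_of_le (fun k => norm_nonneg _) (fun k => ?_)
      ((summable_mul_shift l2a' l2b' l).mul_right C)
    rw [norm_mul, norm_mul]
    exact mul_le_mul_of_nonneg_left (hw k) (by positivity)
  rw [← Summable.tsum_sub sum_ab sum_ab']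
  have snorm : Summable fun k : ℤ => ‖a k * b (l - k) * w k - a' k * b' (l - k) * w k‖ :=
    Summable.of_nonneg_of_le (fun k => norm_nonneg _) hb sum_maj
  refine le_trans (norm_tsum_le_tsum_norm snorm) ?_
  refine le_trans (Summable.tsum_le_tsum hb snorm sum_maj) ?_
  rw [tsum_mul_left, Summable.tsum_add sA sB]



variable {r : ℝ}

lemma norm_conj' (z : ℂ) : ‖(starRingEnd ℂ) z‖ = ‖z‖ := by
  rw [Complex.norm_conj]

lemma weighted_diff_bound2 {a a' : ℤ → ℂ}
    (l2a : Summable fun k : ℤ => ‖a k‖ ^ 2) (l2a' : Summable fun k : ℤ => ‖a' k‖ ^ 2)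
    {w : ℤ → ℂ} {C : ℝ} (hC : 0 ≤ C) (hw : ∀ k, ‖w k‖ ≤ C) (l : ℤ) :
    ‖(∑' m : ℤ, a (l + m) * (starRingEnd ℂ) (a m) * w m)
        - ∑' m : ℤ, a' (l + m) * (starRingEnd ℂ) (a' m) * w m‖
      ≤ C * ((∑' m : ℤ, ‖a (l + m) - a' (l + m)‖ * ‖a m‖)
          + ∑' m : ℤ, ‖a' (l + m)‖ * ‖a m - a' m‖) := by
  have l2Δ : Summable fun k : ℤ => ‖a k - a' k‖ ^ 2 := l2_sub l2a l2a'
  have sA : Summable fun m : ℤ => ‖a (l + m) - a' (l + m)‖ * ‖a m‖ := by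
    have := summable_mul_shift' (a := fun k => a k - a' k) (b := a) l2Δ l2a l
    exact this.congr fun k => rfl
  have sB : Summable fun m : ℤ => ‖a' (l + m)‖ * ‖a m - a' m‖ := by
    have := summable_mul_shift' (a := a') (b := fun k => a k - a' k) l2a' l2Δ l
    exact this.congr fun k => rfl
  have sum_maj : Summable fun m : ℤ =>
      C * (‖a (l + m) - a' (l + m)‖ * ‖a m‖ + ‖a' (l + m)‖ * ‖a m - a' m‖) :=
    (sA.add sB).mul_left C
  have hb : ∀ m : ℤ, ‖a (l + m) * (starRingEnd ℂ) (a m) * w m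
        - a' (l + m) * (starRingEnd ℂ) (a' m) * w m‖
      ≤ C * (‖a (l + m) - a' (l + m)‖ * ‖a m‖ + ‖a' (l + m)‖ * ‖a m - a' m‖) := by
    intro m
    have hd : a (l + m) * (starRingEnd ℂ) (a m) * w m
          - a' (l + m) * (starRingEnd ℂ) (a' m) * w m
        = ((a (l + m) - a' (l + m)) * (starRingEnd ℂ) (a m)
            + a' (l + m) * (starRingEnd ℂ) (a m - a' m)) * w m := by
      rw [map_sub]; ring
    rw [hd, norm_mul]
    calc ‖(a (l + m) - a' (l + m)) * (starRingEnd ℂ) (a m)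
          + a' (l + m) * (starRingEnd ℂ) (a m - a' m)‖ * ‖w m‖
        ≤ (‖a (l + m) - a' (l + m)‖ * ‖a m‖ + ‖a' (l + m)‖ * ‖a m - a' m‖) * C := by
          apply mul_le_mul _ (hw m) (norm_nonneg _) (by positivity)
          refine le_trans (norm_add_le _ _) ?_
          rw [norm_mul, norm_mul, norm_conj', norm_conj']
      _ = _ := mul_comm _ _
  have sum_ab : Summable fun m : ℤ => a (l + m) * (starRingEnd ℂ) (a m) * w m := by
    apply Summable.of_norm
    refine Summable.of_nonneg_of_le (fun k => norm_nonneg _) (fun k => ?_)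
      ((summable_mul_shift' l2a l2a l).mul_right C)
    rw [norm_mul, norm_mul, norm_conj']
    exact mul_le_mul_of_nonneg_left (hw k) (by positivity)
  have sum_ab' : Summable fun m : ℤ => a' (l + m) * (starRingEnd ℂ) (a' m) * w m := by
    apply Summable.of_norm
    refine Summable.of_nonneg_of_le (fun k => norm_nonneg _) (fun k => ?_)
      ((summable_mul_shift' l2a' l2a' l).mul_right C)
    rw [norm_mul, norm_mul, norm_conj']
    exact mul_le_mul_of_nonneg_left (hw k) (by positivity)
  rw [← Summable.tsum_sub sum_ab sum_ab']
  have snorm : Summable fun m : ℤ => ‖a (l + m) * (starRingEnd ℂ) (a m) * w m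
      - a' (l + m) * (starRingEnd ℂ) (a' m) * w m‖ :=
    Summable.of_nonneg_of_le (fun k => norm_nonneg _) hb sum_maj
  refine le_trans (norm_tsum_le_tsum_norm snorm) ?_
  refine le_trans (Summable.tsum_le_tsum hb snorm sum_maj) ?_
  rw [tsum_mul_left, Summable.tsum_add sA sB]

lemma dI1_bound (hr0 : 0 ≤ r) {τ : ℝ} (hτ : 0 ≤ τ) {f g : ℤ → ℂ}
    (hf : inH r f) (hg : inH r g) (l : ℤ) :
    ENNReal.ofReal ‖I1 τ f l - I1 τ g l‖
      ≤ ENNReal.ofReal τ * (econv (ee fun k => f k - g k) (ee f) l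
          + econv (ee g) (ee fun k => f k - g k) l) := by
  have l2f := l2_of_inH hr0 hf
  have l2g := l2_of_inH hr0 hg
  have hreal := weighted_diff_bound (a := f) (b := f) (a' := g) (b' := g) l2f l2f l2g l2g
      (w := fun k => ∫ s in (0:ℝ)..τ, Complex.exp (-2 * Complex.I * s * k * (l - k)))
      hτ (fun k => key_int hτ _ fun s =>
        ⟨-2 * s * k * (l - k), by push_cast; ring_nf⟩) l
  rw [I1, I1]
  refine le_trans (ENNReal.ofReal_le_ofReal hreal) ?_
  rw [ENNReal.ofReal_mul hτ,
    ENNReal.ofReal_add (tsum_nonneg fun k => by positivity) (tsum_nonneg fun k => by positivity),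
    ofReal_tsum_prod (fun k => f k - g k) f l (summable_mul_shift (l2_sub l2f l2g) l2f l),
    ofReal_tsum_prod g (fun k => f k - g k) l (summable_mul_shift l2g (l2_sub l2f l2g) l)]

lemma dI2_bound (hr0 : 0 ≤ r) {τ : ℝ} (hτ : 0 ≤ τ) {f g : ℤ → ℂ}
    (hf : inH r f) (hg : inH r g) (l : ℤ) :
    ENNReal.ofReal ‖I2 τ f l - I2 τ g l‖
      ≤ ENNReal.ofReal τ * (econv (ee fun k => f k - g k) (ee fun j => f (-j)) l
          + econv (ee g) (ee fun j => (fun k => f k - g k) (-j)) l) := by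
  have l2f := l2_of_inH hr0 hf
  have l2g := l2_of_inH hr0 hg
  have hreal := weighted_diff_bound2 (a := f) (a' := g) l2f l2g
      (w := fun m => ∫ s in (0:ℝ)..τ, Complex.exp (2 * Complex.I * s * l * m))
      hτ (fun m => key_int hτ _ fun s =>
        ⟨2 * s * l * m, by push_cast; ring_nf⟩) l
  rw [I2, I2]
  refine le_trans (ENNReal.ofReal_le_ofReal hreal) ?_
  rw [ENNReal.ofReal_mul hτ,
    ENNReal.ofReal_add (tsum_nonneg fun k => by positivity) (tsum_nonneg fun k => by positivity),
    ofReal_tsum_prod' (fun k => f k - g k) f l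
      ((summable_mul_shift' (l2_sub l2f l2g) l2f l).congr fun k => rfl),
    ofReal_tsum_prod' g (fun k => f k - g k) l
      ((summable_mul_shift' l2g (l2_sub l2f l2g) l).congr fun k => rfl)]

lemma dI3_bound (hr0 : 0 ≤ r) {τ : ℝ} (hτ : 0 ≤ τ) {f g : ℤ → ℂ}
    (hf : inH r f) (hg : inH r g) (l : ℤ) :
    ENNReal.ofReal ‖I3 τ f l - I3 τ g l‖
      ≤ ENNReal.ofReal τ *
        (econv (ee (conjSeq fun k => f k - g k)) (ee (conjSeq f)) l
          + econv (ee (conjSeq g)) (ee (conjSeq fun k => f k - g k)) l) := by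
  have l2cf : Summable fun k : ℤ => ‖conjSeq f k‖ ^ 2 := l2_conjSeq (l2_of_inH hr0 hf)
  have l2cg : Summable fun k : ℤ => ‖conjSeq g k‖ ^ 2 := l2_conjSeq (l2_of_inH hr0 hg)
  have hψ : ‖psi1 (-2 * Complex.I * (τ : ℂ) * (l : ℂ) ^ 2)‖ ≤ 1 := by
    have harg : -2 * Complex.I * (τ : ℂ) * (l : ℂ) ^ 2
        = Complex.I * ((-2 * τ * (l : ℝ) ^ 2 : ℝ) : ℂ) := by push_cast; ring
    rw [harg]
    exact norm_psi1_le _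
  have hconv : ‖conv (conjSeq f) (conjSeq f) l - conv (conjSeq g) (conjSeq g) l‖
      ≤ 1 * ((∑' k : ℤ, ‖conjSeq f k - conjSeq g k‖ * ‖conjSeq f (l - k)‖)
          + ∑' k : ℤ, ‖conjSeq g k‖ * ‖conjSeq f (l - k) - conjSeq g (l - k)‖) := by
    have h1 : conv (conjSeq f) (conjSeq f) l
        = ∑' k : ℤ, conjSeq f k * conjSeq f (l - k) * (fun _ : ℤ => (1:ℂ)) k :=
      tsum_congr fun k => by simp
    have h2 : conv (conjSeq g) (conjSeq g) l
        = ∑' k : ℤ, conjSeq g k * conjSeq g (l - k) * (fun _ : ℤ => (1:ℂ)) k :=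
      tsum_congr fun k => by simp
    rw [h1, h2]
    exact weighted_diff_bound l2cf l2cf l2cg l2cg (w := fun _ => (1:ℂ)) zero_le_one
      (fun k => by simp) l
  have hfactor : I3 τ f l - I3 τ g l
      = (τ : ℂ) * psi1 (-2 * Complex.I * (τ : ℂ) * (l : ℂ) ^ 2)
        * (conv (conjSeq f) (conjSeq f) l - conv (conjSeq g) (conjSeq g) l) := by
    rw [I3, I3]; ring
  have hnorm : ‖I3 τ f l - I3 τ g l‖
      ≤ τ * ((∑' k : ℤ, ‖conjSeq f k - conjSeq g k‖ * ‖conjSeq f (l - k)‖)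
          + ∑' k : ℤ, ‖conjSeq g k‖ * ‖conjSeq f (l - k) - conjSeq g (l - k)‖) := by
    rw [hfactor, norm_mul, norm_mul, Complex.norm_real, Real.norm_eq_abs, abs_of_nonneg hτ]
    rw [one_mul] at hconv
    calc τ * ‖psi1 (-2 * Complex.I * (τ:ℂ) * (l:ℂ) ^ 2)‖
          * ‖conv (conjSeq f) (conjSeq f) l - conv (conjSeq g) (conjSeq g) l‖
        ≤ τ * 1 * ((∑' k : ℤ, ‖conjSeq f k - conjSeq g k‖ * ‖conjSeq f (l - k)‖)
          + ∑' k : ℤ, ‖conjSeq g k‖ * ‖conjSeq f (l - k) - conjSeq g (l - k)‖) := by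
          apply mul_le_mul (mul_le_mul_of_nonneg_left hψ hτ) hconv (norm_nonneg _)
            (by positivity)
      _ = _ := by rw [mul_one]
  refine le_trans (ENNReal.ofReal_le_ofReal hnorm) ?_
  have hc1 : (fun k : ℤ => conjSeq f k - conjSeq g k) = conjSeq fun k => f k - g k :=
    conjSeq_sub f g
  rw [ENNReal.ofReal_mul hτ,
    ENNReal.ofReal_add (tsum_nonneg fun k => by positivity) (tsum_nonneg fun k => by positivity),
    ofReal_tsum_prod (fun k => conjSeq f k - conjSeq g k) (conjSeq f) l
      (summable_mul_shift (l2_sub l2cf l2cg) l2cf l),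
    ofReal_tsum_prod (conjSeq g) (fun k => conjSeq f k - conjSeq g k) l
      (summable_mul_shift l2cg (l2_sub l2cf l2cg) l),
    hc1]



lemma norm_two_mul (z : ℂ) : ‖(2:ℂ) * z‖ = 2 * ‖z‖ := by
  rw [norm_mul]; norm_num

lemma phi_pointwise {c τ : ℝ} (hc : 0 < c) (hτ : 0 ≤ τ) (f g : ℤ → ℂ) (k : ℤ) :
    ee (fun k => Phi c τ f k - Phi c τ g k) k
      ≤ ee (fun k => f k - g k) k
        + (ENNReal.ofReal (Real.sqrt c * τ / 2) * ee (fun k => f k - g k) k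
        + (ENNReal.ofReal (Real.sqrt c * τ / 2) * ee (conjSeq fun k => f k - g k) k
        + ENNReal.ofReal (1/4 : ℝ) * (ENNReal.ofReal ‖I1 τ f k - I1 τ g k‖
            + (ENNReal.ofReal (2:ℝ) * ENNReal.ofReal ‖I2 τ f k - I2 τ g k‖
            + ENNReal.ofReal ‖I3 τ f k - I3 τ g k‖)))) := by
  set x := Real.sqrt (c + (k : ℝ) ^ 2 + (k : ℝ) ^ 4) with hxdef
  have hxpos : 0 < x := Real.sqrt_pos.mpr (by positivity)
  have hscpos : 0 < Real.sqrt c := Real.sqrt_pos.mpr hc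
  have hsc : Real.sqrt c ≤ x := Real.sqrt_le_sqrt (by nlinarith [sq_nonneg ((k:ℝ)), sq_nonneg ((k:ℝ)^2)])
  have hk2 : (k : ℝ) ^ 2 ≤ x := by
    have h1 : Real.sqrt ((k : ℝ) ^ 4) = (k : ℝ) ^ 2 := by
      rw [show ((k:ℝ) ^ 4) = ((k:ℝ) ^ 2) ^ 2 by ring, Real.sqrt_sq (by positivity)]
    rw [← h1]
    exact Real.sqrt_le_sqrt (by nlinarith [sq_nonneg ((k:ℝ))])
  set E : ℂ := Complex.exp (Complex.I * τ * (x : ℂ)) with hEdef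
  set m2 : ℂ := Complex.I * c * τ / 2 * (1 / (x : ℂ)) * E with hm2def
  set m3 : ℂ := m2 * psi1 (-2 * Complex.I * τ * (k : ℂ) ^ 2) with hm3def
  set m4 : ℂ := Complex.I / 4 * ((-(k : ℝ) ^ 2 : ℝ) : ℂ) * (1 / (x : ℂ)) * E with hm4def
  have hE : ‖E‖ = 1 := by
    rw [hEdef, show Complex.I * τ * (x : ℂ) = Complex.I * ((τ * x : ℝ) : ℂ) by push_cast; ring,
      norm_exp_I_mul_real]
  have hnormx : ‖(1 / (x : ℂ))‖ = 1 / x := by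
    rw [norm_div, norm_one, Complex.norm_real, Real.norm_eq_abs, abs_of_pos hxpos]
  have hm2 : ‖m2‖ ≤ Real.sqrt c * τ / 2 := by
    rw [hm2def, norm_mul, norm_mul, hE, hnormx, mul_one]
    have h1 : ‖Complex.I * (c : ℂ) * (τ : ℂ) / 2‖ = c * τ / 2 := by
      rw [show Complex.I * (c : ℂ) * (τ : ℂ) / 2 = ((c * τ / 2 : ℝ) : ℂ) * Complex.I by
        push_cast; ring, norm_mul, Complex.norm_real, Complex.norm_I, mul_one,
        Real.norm_eq_abs, abs_of_nonneg (by positivity)]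
    rw [h1]
    have h2 : 1 / x ≤ 1 / Real.sqrt c := one_div_le_one_div_of_le hscpos hsc
    have h3 : c * τ / 2 * (1 / x) ≤ c * τ / 2 * (1 / Real.sqrt c) :=
      mul_le_mul_of_nonneg_left h2 (by positivity)
    have h4 : c * τ / 2 * (1 / Real.sqrt c) = Real.sqrt c * τ / 2 := by
      rw [mul_one_div]
      rw [show c * τ / 2 / Real.sqrt c = c / Real.sqrt c * τ / 2 by ring, Real.div_sqrt]
    linarith
  have hψ : ‖psi1 (-2 * Complex.I * (τ : ℂ) * (k : ℂ) ^ 2)‖ ≤ 1 := by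
    rw [show -2 * Complex.I * (τ : ℂ) * (k : ℂ) ^ 2
        = Complex.I * ((-2 * τ * (k : ℝ) ^ 2 : ℝ) : ℂ) by push_cast; ring]
    exact norm_psi1_le _
  have hm3 : ‖m3‖ ≤ Real.sqrt c * τ / 2 := by
    rw [hm3def, norm_mul]
    calc ‖m2‖ * ‖psi1 (-2 * Complex.I * (τ:ℂ) * (k:ℂ) ^ 2)‖
        ≤ (Real.sqrt c * τ / 2) * 1 :=
          mul_le_mul hm2 hψ (norm_nonneg _) (by positivity)
      _ = Real.sqrt c * τ / 2 := mul_one _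
  have hm4 : ‖m4‖ ≤ 1 / 4 := by
    rw [hm4def, norm_mul, norm_mul, norm_mul, hE, hnormx, mul_one, norm_div]
    rw [Complex.norm_I, Complex.norm_real, Real.norm_eq_abs, abs_neg,
      abs_of_nonneg (sq_nonneg ((k:ℝ)))]
    have h5 : (k : ℝ) ^ 2 * (1 / x) ≤ 1 := by
      rw [mul_one_div]
      exact div_le_one_of_le₀ hk2 hxpos.le
    have h6 : ‖(4 : ℂ)‖ = 4 := by norm_num
    rw [h6]
    nlinarith [sq_nonneg ((k:ℝ)), mul_nonneg (sq_nonneg ((k:ℝ))) (le_of_lt (one_div_pos.mpr hxpos))]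
  have hsplit : Phi c τ f k - Phi c τ g k
      = E * (f k - g k) - m2 * (f k - g k) - m3 * (conjSeq f k - conjSeq g k)
        - m4 * ((I1 τ f k - I1 τ g k)
            + ((2:ℂ) * (I2 τ f k - I2 τ g k) + (I3 τ f k - I3 τ g k))) := by
    simp only [Phi, hEdef, hm2def, hm3def, hm4def]
    ring
  have habs4 : ∀ a b c' d : ℂ, ‖a - b - c' - d‖ ≤ ‖a‖ + (‖b‖ + (‖c'‖ + ‖d‖)) := by
    intro a b c' d
    calc ‖a - b - c' - d‖ ≤ ‖a - b - c'‖ + ‖d‖ := norm_sub_le _ _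
      _ ≤ (‖a - b‖ + ‖c'‖) + ‖d‖ := by linarith [norm_sub_le (a - b) c']
      _ ≤ ((‖a‖ + ‖b‖) + ‖c'‖) + ‖d‖ := by linarith [norm_sub_le a b]
      _ = ‖a‖ + (‖b‖ + (‖c'‖ + ‖d‖)) := by ring
  have hconj : conjSeq f k - conjSeq g k = conjSeq (fun k => f k - g k) k :=
    congrFun (conjSeq_sub f g) k
  have hreal : ‖Phi c τ f k - Phi c τ g k‖
      ≤ ‖f k - g k‖ + (Real.sqrt c * τ / 2 * ‖f k - g k‖
        + (Real.sqrt c * τ / 2 * ‖conjSeq (fun k => f k - g k) k‖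
        + 1/4 * (‖I1 τ f k - I1 τ g k‖
            + (2 * ‖I2 τ f k - I2 τ g k‖ + ‖I3 τ f k - I3 τ g k‖)))) := by
    rw [hsplit]
    refine le_trans (habs4 _ _ _ _) ?_
    have t1 : ‖E * (f k - g k)‖ ≤ ‖f k - g k‖ := by
      rw [norm_mul, hE, one_mul]
    have t2 : ‖m2 * (f k - g k)‖ ≤ Real.sqrt c * τ / 2 * ‖f k - g k‖ := by
      rw [norm_mul]
      exact mul_le_mul_of_nonneg_right hm2 (norm_nonneg _)
    have t3 : ‖m3 * (conjSeq f k - conjSeq g k)‖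
        ≤ Real.sqrt c * τ / 2 * ‖conjSeq (fun k => f k - g k) k‖ := by
      rw [norm_mul, hconj]
      exact mul_le_mul_of_nonneg_right hm3 (norm_nonneg _)
    have t4 : ‖m4 * ((I1 τ f k - I1 τ g k)
          + ((2:ℂ) * (I2 τ f k - I2 τ g k) + (I3 τ f k - I3 τ g k)))‖
        ≤ 1/4 * (‖I1 τ f k - I1 τ g k‖
            + (2 * ‖I2 τ f k - I2 τ g k‖ + ‖I3 τ f k - I3 τ g k‖)) := by
      rw [norm_mul]
      have hin : ‖(I1 τ f k - I1 τ g k)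
            + ((2:ℂ) * (I2 τ f k - I2 τ g k) + (I3 τ f k - I3 τ g k))‖
          ≤ ‖I1 τ f k - I1 τ g k‖
            + (2 * ‖I2 τ f k - I2 τ g k‖ + ‖I3 τ f k - I3 τ g k‖) := by
        refine le_trans (norm_add_le _ _) ?_
        have := norm_add_le ((2:ℂ) * (I2 τ f k - I2 τ g k)) (I3 τ f k - I3 τ g k)
        rw [norm_two_mul] at this
        linarith
      exact mul_le_mul hm4 hin (norm_nonneg _) (by norm_num)
    linarith
  calc ee (fun k => Phi c τ f k - Phi c τ g k) k
      = ENNReal.ofReal ‖Phi c τ f k - Phi c τ g k‖ := rfl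
    _ ≤ ENNReal.ofReal (‖f k - g k‖ + (Real.sqrt c * τ / 2 * ‖f k - g k‖
        + (Real.sqrt c * τ / 2 * ‖conjSeq (fun k => f k - g k) k‖
        + 1/4 * (‖I1 τ f k - I1 τ g k‖
            + (2 * ‖I2 τ f k - I2 τ g k‖ + ‖I3 τ f k - I3 τ g k‖))))) :=
        ENNReal.ofReal_le_ofReal hreal
    _ = _ := by
        rw [ENNReal.ofReal_add (by positivity) (by positivity),
          ENNReal.ofReal_add (by positivity) (by positivity),
          ENNReal.ofReal_add (by positivity) (by positivity),
          ENNReal.ofReal_mul (by positivity), ENNReal.ofReal_mul (by positivity),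
          ENNReal.ofReal_mul (by positivity),
          ENNReal.ofReal_add (by positivity) (by positivity),
          ENNReal.ofReal_add (by positivity) (by positivity),
          ENNReal.ofReal_mul (by positivity)]
        rfl




lemma add_ofReal_le {a1 a2 : ℝ≥0∞} {b1 b2 : ℝ} (hb1 : 0 ≤ b1) (hb2 : 0 ≤ b2)
    (h1 : a1 ≤ ENNReal.ofReal b1) (h2 : a2 ≤ ENNReal.ofReal b2) :
    a1 + a2 ≤ ENNReal.ofReal (b1 + b2) := by
  rw [ENNReal.ofReal_add hb1 hb2]; exact add_le_add h1 h2

lemma mul_ofReal_le {a : ℝ≥0∞} {C b : ℝ} (hC : 0 ≤ C) (h : a ≤ ENNReal.ofReal b) :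
    ENNReal.ofReal C * a ≤ ENNReal.ofReal (C * b) := by
  rw [ENNReal.ofReal_mul hC]; exact mul_le_mul_right h _

lemma EN_four_bound {r : ℝ} (w u1 u2 u3 u4 : ℤ → ℝ≥0∞)
    (hpt : ∀ k, w k ≤ u1 k + (u2 k + (u3 k + u4 k)))
    {b1 b2 b3 b4 : ℝ} (h1 : 0 ≤ b1) (h2 : 0 ≤ b2) (h3 : 0 ≤ b3) (h4 : 0 ≤ b4)
    (e1 : EN r u1 ≤ ENNReal.ofReal b1) (e2 : EN r u2 ≤ ENNReal.ofReal b2)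
    (e3 : EN r u3 ≤ ENNReal.ofReal b3) (e4 : EN r u4 ≤ ENNReal.ofReal b4) :
    EN r w ≤ ENNReal.ofReal (b1 + (b2 + (b3 + b4))) :=
  le_trans (EN_mono hpt) (le_trans (EN_add _ _) (add_ofReal_le h1
    (by positivity) e1 (le_trans (EN_add _ _) (add_ofReal_le h2 (by positivity) e2
      (le_trans (EN_add _ _) (add_ofReal_le h3 h4 e3 e4))))))

lemma EN_tau_pair {r : ℝ} (A c1 c2 : ℤ → ℝ≥0∞) {τ b1 b2 : ℝ}
    (hτ : 0 ≤ τ) (hb1 : 0 ≤ b1) (hb2 : 0 ≤ b2)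
    (hpt : ∀ k, A k ≤ ENNReal.ofReal τ * (c1 k + c2 k))
    (h1 : EN r c1 ≤ ENNReal.ofReal b1) (h2 : EN r c2 ≤ ENNReal.ofReal b2) :
    EN r A ≤ ENNReal.ofReal (τ * (b1 + b2)) := by
  refine le_trans (EN_mono hpt) ?_
  have e : EN r (fun k => ENNReal.ofReal τ * (c1 k + c2 k))
      = ENNReal.ofReal τ * EN r (fun k => c1 k + c2 k) := EN_const_mul _ _
  rw [e]
  exact mul_ofReal_le hτ (le_trans (EN_add _ _) (add_ofReal_le hb1 hb2 h1 h2))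

lemma EN_scaled_mul {r : ℝ} (B : ℤ → ℝ≥0∞) {C b : ℝ} (hC : 0 ≤ C)
    (h : EN r B ≤ ENNReal.ofReal b) :
    EN r (fun k => ENNReal.ofReal C * B k) ≤ ENNReal.ofReal (C * b) := by
  have e : EN r (fun k => ENNReal.ofReal C * B k) = ENNReal.ofReal C * EN r B :=
    EN_const_mul _ _
  rw [e]
  exact mul_ofReal_le hC h

lemma EN_quarter {r : ℝ} (A B C : ℤ → ℝ≥0∞) {S1 S2 S3 : ℝ}
    (h1 : 0 ≤ S1) (h2 : 0 ≤ S2) (h3 : 0 ≤ S3)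
    (eA : EN r A ≤ ENNReal.ofReal S1) (eB : EN r B ≤ ENNReal.ofReal S2)
    (eC : EN r C ≤ ENNReal.ofReal S3) :
    EN r (fun k => ENNReal.ofReal (1/4 : ℝ)
        * (A k + (ENNReal.ofReal (2:ℝ) * B k + C k)))
      ≤ ENNReal.ofReal (1/4 * (S1 + (2 * S2 + S3))) := by
  have e : EN r (fun k => ENNReal.ofReal (1/4 : ℝ)
        * (A k + (ENNReal.ofReal (2:ℝ) * B k + C k)))
      = ENNReal.ofReal (1/4 : ℝ) * EN r (fun k => A k + (ENNReal.ofReal (2:ℝ) * B k + C k)) :=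
    EN_const_mul _ _
  rw [e]
  refine mul_ofReal_le (by norm_num) ?_
  refine le_trans (EN_add _ _) (add_ofReal_le h1
    (add_nonneg (mul_nonneg (by norm_num) h2) h3) eA ?_)
  refine le_trans (EN_add _ _) (add_ofReal_le (mul_nonneg (by norm_num) h2) h3 ?_ eC)
  exact EN_scaled_mul B (by norm_num) eB


end PhiAux


set_option maxHeartbeats 1000000 in
open PhiAux in
theorem Phi_stability (r c : ℝ) (hr : 1 / 2 < r) (hc : 0 < c) (Dr : ℝ) (hDr : 0 < Dr)
    (hbil : ∀ f g : ℤ → ℂ, inH r f → inH r g →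
      sobNorm r (conv f g) ≤ Dr * sobNorm r f * sobNorm r g)
    (τ : ℝ) (hτ : 0 ≤ τ) (f g : ℤ → ℂ) (hf : inH r f) (hg : inH r g) :
    sobNorm r (fun k => Phi c τ f k - Phi c τ g k)
      ≤ (1 + (Real.sqrt c + Dr * (sobNorm r f + sobNorm r g)) * τ) *
          sobNorm r (fun k => f k - g k) := by
  have hr0 : (0:ℝ) ≤ r := by linarith
  have hΔ : inH r (fun k => f k - g k) := inH_sub hf hg
  set X := sobNorm r (fun k => f k - g k) with hXdef
  set F := sobNorm r f with hFdef
  set G := sobNorm r g with hGdef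
  have hXnn : 0 ≤ X := hXdef ▸ sobNorm_nonneg r _
  have hFnn : 0 ≤ F := hFdef ▸ sobNorm_nonneg r _
  have hGnn : 0 ≤ G := hGdef ▸ sobNorm_nonneg r _
  have hscnn : 0 ≤ Real.sqrt c := Real.sqrt_nonneg c
  have hRHS : 0 ≤ (1 + (Real.sqrt c + Dr * (F + G)) * τ) * X := by
    have : 0 ≤ Real.sqrt c + Dr * (F + G) :=
      add_nonneg hscnn (mul_nonneg hDr.le (add_nonneg hFnn hGnn))
    exact mul_nonneg (by nlinarith) hXnn
  rw [sobNorm_eq_toReal]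
  apply ENNReal.toReal_le_of_le_ofReal hRHS
  have hDXF : 0 ≤ Dr * X * F := mul_nonneg (mul_nonneg hDr.le hXnn) hFnn
  have hDGX : 0 ≤ Dr * G * X := mul_nonneg (mul_nonneg hDr.le hGnn) hXnn
  have hSnn : 0 ≤ τ * (Dr * X * F + Dr * G * X) := mul_nonneg hτ (add_nonneg hDXF hDGX)
  have hEN1 : EN r (ee fun k => f k - g k) = ENNReal.ofReal X := by
    rw [hXdef]; exact EN_eq_ofReal hΔ
  -- convolution bounds
  have s1 : EN r (econv (ee fun k => f k - g k) (ee f)) ≤ ENNReal.ofReal (Dr * X * F) := by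
    refine le_trans (conv_bound hr0 hDr.le hbil hΔ hf) (le_of_eq ?_)
    rw [hXdef, hFdef]
  have s2 : EN r (econv (ee g) (ee fun k => f k - g k)) ≤ ENNReal.ofReal (Dr * G * X) := by
    refine le_trans (conv_bound hr0 hDr.le hbil hg hΔ) (le_of_eq ?_)
    rw [hXdef, hGdef]
  have s3 : EN r (econv (ee fun k => f k - g k) (ee fun j => f (-j)))
      ≤ ENNReal.ofReal (Dr * X * F) := by
    refine le_trans (conv_bound hr0 hDr.le hbil hΔ (inH_comp_neg (f := f) hf)) (le_of_eq ?_)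
    rw [hXdef, hFdef, sobNorm_comp_neg (f := f)]
  have s4 : EN r (econv (ee g) (ee fun j => (fun k => f k - g k) (-j)))
      ≤ ENNReal.ofReal (Dr * G * X) := by
    refine le_trans (conv_bound hr0 hDr.le hbil hg
      (inH_comp_neg (f := fun k => f k - g k) hΔ)) (le_of_eq ?_)
    rw [hXdef, hGdef, sobNorm_comp_neg (f := fun k => f k - g k)]
  have s5 : EN r (econv (ee (conjSeq fun k => f k - g k)) (ee (conjSeq f)))
      ≤ ENNReal.ofReal (Dr * X * F) := by
    refine le_trans (conv_bound hr0 hDr.le hbil (inH_conjSeq hΔ) (inH_conjSeq hf))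
      (le_of_eq ?_)
    rw [hXdef, hFdef, sobNorm_conjSeq, sobNorm_conjSeq]
  have s6 : EN r (econv (ee (conjSeq g)) (ee (conjSeq fun k => f k - g k)))
      ≤ ENNReal.ofReal (Dr * G * X) := by
    refine le_trans (conv_bound hr0 hDr.le hbil (inH_conjSeq hg) (inH_conjSeq hΔ))
      (le_of_eq ?_)
    rw [hXdef, hGdef, sobNorm_conjSeq, sobNorm_conjSeq]
  -- the three I-difference bounds
  have hA : EN r (fun k => ENNReal.ofReal ‖I1 τ f k - I1 τ g k‖)
      ≤ ENNReal.ofReal (τ * (Dr * X * F + Dr * G * X)) :=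
    EN_tau_pair (fun k => ENNReal.ofReal ‖I1 τ f k - I1 τ g k‖)
      (econv (ee fun k => f k - g k) (ee f)) (econv (ee g) (ee fun k => f k - g k))
      hτ hDXF hDGX (fun k => dI1_bound hr0 hτ hf hg k) s1 s2
  have hB : EN r (fun k => ENNReal.ofReal ‖I2 τ f k - I2 τ g k‖)
      ≤ ENNReal.ofReal (τ * (Dr * X * F + Dr * G * X)) :=
    EN_tau_pair (fun k => ENNReal.ofReal ‖I2 τ f k - I2 τ g k‖)
      (econv (ee fun k => f k - g k) (ee fun j => f (-j)))
      (econv (ee g) (ee fun j => (fun k => f k - g k) (-j)))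
      hτ hDXF hDGX (fun k => dI2_bound hr0 hτ hf hg k) s3 s4
  have hC : EN r (fun k => ENNReal.ofReal ‖I3 τ f k - I3 τ g k‖)
      ≤ ENNReal.ofReal (τ * (Dr * X * F + Dr * G * X)) :=
    EN_tau_pair (fun k => ENNReal.ofReal ‖I3 τ f k - I3 τ g k‖)
      (econv (ee (conjSeq fun k => f k - g k)) (ee (conjSeq f)))
      (econv (ee (conjSeq g)) (ee (conjSeq fun k => f k - g k)))
      hτ hDXF hDGX (fun k => dI3_bound hr0 hτ hf hg k) s5 s6
  -- assemble
  have hu2 : EN r (fun k => ENNReal.ofReal (Real.sqrt c * τ / 2)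
        * ee (fun k => f k - g k) k)
      ≤ ENNReal.ofReal (Real.sqrt c * τ / 2 * X) :=
    EN_scaled_mul _ (by positivity) (le_of_eq hEN1)
  have hu3 : EN r (fun k => ENNReal.ofReal (Real.sqrt c * τ / 2)
        * ee (conjSeq fun k => f k - g k) k)
      ≤ ENNReal.ofReal (Real.sqrt c * τ / 2 * X) := by
    refine EN_scaled_mul _ (by positivity) (le_of_eq ?_)
    rw [EN_ee_conjSeq]; exact hEN1
  have hu4 : EN r (fun k => ENNReal.ofReal (1/4 : ℝ)
        * ((fun k => ENNReal.ofReal ‖I1 τ f k - I1 τ g k‖) k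
          + (ENNReal.ofReal (2:ℝ) * (fun k => ENNReal.ofReal ‖I2 τ f k - I2 τ g k‖) k
          + (fun k => ENNReal.ofReal ‖I3 τ f k - I3 τ g k‖) k)))
      ≤ ENNReal.ofReal (1/4 * (τ * (Dr * X * F + Dr * G * X)
          + (2 * (τ * (Dr * X * F + Dr * G * X)) + τ * (Dr * X * F + Dr * G * X)))) :=
    EN_quarter _ _ _ hSnn hSnn hSnn hA hB hC
  have main : EN r (ee fun k => Phi c τ f k - Phi c τ g k)
      ≤ ENNReal.ofReal (X + (Real.sqrt c * τ / 2 * X + (Real.sqrt c * τ / 2 * X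
          + 1/4 * (τ * (Dr * X * F + Dr * G * X)
            + (2 * (τ * (Dr * X * F + Dr * G * X)) + τ * (Dr * X * F + Dr * G * X)))))) :=
    EN_four_bound (ee fun k => Phi c τ f k - Phi c τ g k)
      (ee fun k => f k - g k)
      (fun k => ENNReal.ofReal (Real.sqrt c * τ / 2) * ee (fun k => f k - g k) k)
      (fun k => ENNReal.ofReal (Real.sqrt c * τ / 2) * ee (conjSeq fun k => f k - g k) k)
      (fun k => ENNReal.ofReal (1/4 : ℝ) * (ENNReal.ofReal ‖I1 τ f k - I1 τ g k‖
          + (ENNReal.ofReal (2:ℝ) * ENNReal.ofReal ‖I2 τ f k - I2 τ g k‖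
          + ENNReal.ofReal ‖I3 τ f k - I3 τ g k‖)))
      (phi_pointwise hc hτ f g)
      hXnn (by positivity) (by positivity)
      (by nlinarith [hSnn]) (le_of_eq hEN1) hu2 hu3 hu4
  refine le_trans main (ENNReal.ofReal_le_ofReal (le_of_eq ?_))
  ring
end
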